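/- arXiv:2009.07915 — 14 statements merged into one kernel-verified Lean document; each statement's English description precedes it below -/
import Mathlib

section
/- Let a_j = −1/(x_j − x_A) and a_k = −1/(x_k − x_A) be two singularities of g with a_j < a_k (y_j ≥ 1, y_k ≥ 1) that are consecutive, i.e., there is no index i with y_i ≥ 1 and a_j < −1/(x_i − x_A) < a_k. Then there exists exactly one a in the open interval (a_j, a_k) with g(a) = 0. -/
/-- Between two consecutive singularities `a_j = -1/(x j - xA)` and
`a_k = -1/(x k - xA)` of `g`, there is exactly one zero of `g`. -/
theorem cash_linear_g_unique_zero_between_singularities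
    (N : ℕ) (x : Fin N → ℝ) (xA xB : ℝ)
    (hx : ∀ i, xA < x i ∧ x i < xB)
    (y : Fin N → ℕ) (j k : Fin N) (hyj : 1 ≤ y j) (hyk : 1 ≤ y k)
    (hjk : -1 / (x j - xA) < -1 / (x k - xA))
    (hconsec : ¬ ∃ i, 1 ≤ y i ∧ -1 / (x j - xA) < -1 / (x i - xA) ∧
      -1 / (x i - xA) < -1 / (x k - xA))
    (g : ℝ → ℝ)
    (hg : ∀ a, g a = ∑ i, (y i : ℝ) * (x i - xA) / (1 + a * (x i - xA))) :
    ∃! a, a ∈ Set.Ioo (-1 / (x j - xA)) (-1 / (x k - xA)) ∧ g a = 0 := by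
  have hc : ∀ i, 0 < x i - xA := fun i => sub_pos.2 (hx i).1
  set s : Fin N → ℝ := fun i => -1 / (x i - xA) with hs
  -- rewrite each term
  have hterm : ∀ (a : ℝ) (i : Fin N),
      (y i : ℝ) * (x i - xA) / (1 + a * (x i - xA)) = (y i : ℝ) / (a - s i) := by
    intro a i
    have hci : (x i - xA) ≠ 0 := (hc i).ne'
    have hden : 1 + a * (x i - xA) = (x i - xA) * (a - s i) := by
      simp only [hs]
      field_simp
      ring
    rw [hden, mul_comm ((y i : ℝ)) (x i - xA), mul_div_mul_left _ _ hci]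
  set f : ℝ → ℝ := fun a => ∑ i, (y i : ℝ) / (a - s i) with hf
  have hgf : ∀ a, g a = f a := by
    intro a; rw [hg a]; exact Finset.sum_congr rfl fun i _ => hterm a i
  have hjk' : s j < s k := hjk
  push_neg at hconsec
  have hclass : ∀ i, 1 ≤ y i → s i ≤ s j ∨ s k ≤ s i := by
    intro i hi
    rcases le_or_gt (s i) (s j) with h | h
    · exact Or.inl h
    · exact Or.inr (hconsec i hi h)
  -- sizes
  set M : ℝ := ∑ i, (y i : ℝ) with hM
  have hMnn : ∀ i : Fin N, (0:ℝ) ≤ (y i : ℝ) := fun i => by positivity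
  have hM1 : (1 : ℝ) ≤ M := by
    calc (1:ℝ) ≤ (y j : ℝ) := by exact_mod_cast hyj
    _ ≤ M := Finset.single_le_sum (f := fun i => (y i:ℝ)) (fun i _ => hMnn i)
        (Finset.mem_univ j)
  set L : ℝ := s k - s j with hL
  have hL0 : 0 < L := sub_pos.2 hjk'
  set δ : ℝ := L / (2 * (M + 1)) with hδ
  have hδ0 : 0 < δ := by positivity
  have hδL : δ < L / 2 := by
    rw [hδ, div_lt_div_iff₀ (by positivity) (by norm_num)]
    nlinarith
  set a1 : ℝ := s j + δ with ha1def
  set a2 : ℝ := s k - δ with ha2def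
  have ha1 : s j < a1 := by simp only [ha1def]; linarith
  have ha1' : a1 < s k := by simp only [ha1def]; simp only [hL] at hδL; linarith
  have ha2 : s j < a2 := by simp only [ha2def]; simp only [hL] at hδL; linarith
  have ha2' : a2 < s k := by simp only [ha2def]; linarith
  have ha12 : a1 < a2 := by
    simp only [ha1def, ha2def]; simp only [hL] at hδL; linarith
  -- strict monotonicity of each nonzero term
  have key : ∀ a b : ℝ, a ∈ Set.Ioo (s j) (s k) → b ∈ Set.Ioo (s j) (s k) → a < b →
      ∀ i, 1 ≤ y i → (y i : ℝ)/(b - s i) < (y i : ℝ)/(a - s i) := by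
    intro a b ha hb hab i hi
    have hy : (0:ℝ) < (y i : ℝ) := by exact_mod_cast hi
    rcases hclass i hi with h | h
    · have h1 : 0 < a - s i := by linarith [ha.1]
      have h2 : a - s i < b - s i := by linarith
      rw [div_eq_mul_one_div ((y i:ℝ)), div_eq_mul_one_div ((y i:ℝ))]
      exact mul_lt_mul_of_pos_left (one_div_lt_one_div_of_lt h1 h2) hy
    · have h1 : b - s i < 0 := by linarith [hb.2]
      have h2 : a - s i < b - s i := by linarith
      rw [div_eq_mul_one_div ((y i:ℝ)), div_eq_mul_one_div ((y i:ℝ))]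
      exact mul_lt_mul_of_pos_left (one_div_lt_one_div_of_neg_of_lt h1 h2) hy
  have hanti : StrictAntiOn f (Set.Ioo (s j) (s k)) := by
    intro a ha b hb hab
    simp only [hf]
    apply Finset.sum_lt_sum
    · intro i _
      by_cases hyi : 1 ≤ y i
      · exact (key a b ha hb hab i hyi).le
      · have hz : y i = 0 := by omega
        simp [hz]
    · exact ⟨j, Finset.mem_univ j, key a b ha hb hab j hyj⟩
  -- value at a1 is positive
  have hfa1 : 0 < f a1 := by
    have hsk1 : 0 < s k - a1 := by linarith
    have hbnd : ∀ i ∈ Finset.univ.erase j,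
        -((y i:ℝ)/(s k - a1)) ≤ (y i:ℝ)/(a1 - s i) := by
      intro i _
      by_cases hyi : 1 ≤ y i
      · rcases hclass i hyi with h | h
        · have h1 : 0 < a1 - s i := by linarith
          have : (0:ℝ) ≤ (y i:ℝ)/(a1 - s i) := div_nonneg (hMnn i) h1.le
          have : (0:ℝ) ≤ (y i:ℝ)/(s k - a1) := div_nonneg (hMnn i) hsk1.le
          linarith [div_nonneg (hMnn i) h1.le]
        · have h1 : a1 - s i ≤ a1 - s k := by linarith
          have h2 : a1 - s k < 0 := by linarith
          have h3 : -((y i:ℝ)/(s k - a1)) = (y i:ℝ)/(a1 - s k) := by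
            rw [← div_neg]; ring_nf
          rw [h3, div_eq_mul_one_div ((y i:ℝ)), div_eq_mul_one_div ((y i:ℝ))]
          exact mul_le_mul_of_nonneg_left (one_div_le_one_div_of_neg_of_le h2 h1) (hMnn i)
      · have hz : y i = 0 := by omega
        simp [hz]
    have hsum : ∑ i ∈ Finset.univ.erase j, (y i:ℝ)/(a1 - s i)
        ≥ -(M/(s k - a1)) := by
      have h1 : ∑ i ∈ Finset.univ.erase j, -((y i:ℝ)/(s k - a1))
          ≤ ∑ i ∈ Finset.univ.erase j, (y i:ℝ)/(a1 - s i) :=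
        Finset.sum_le_sum hbnd
      have h2 : ∑ i ∈ Finset.univ.erase j, -((y i:ℝ)/(s k - a1))
          = -((∑ i ∈ Finset.univ.erase j, (y i:ℝ))/(s k - a1)) := by
        rw [Finset.sum_neg_distrib, Finset.sum_div]
      have h3 : ∑ i ∈ Finset.univ.erase j, (y i:ℝ) ≤ M := by
        apply Finset.sum_le_sum_of_subset_of_nonneg (Finset.erase_subset _ _)
        intro i _ _; exact hMnn i
      have h4 : (∑ i ∈ Finset.univ.erase j, (y i:ℝ))/(s k - a1) ≤ M/(s k - a1) :=
        (div_le_div_iff_of_pos_right hsk1).2 h3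
      linarith
    have hsplit : f a1 = (∑ i ∈ Finset.univ.erase j, (y i:ℝ)/(a1 - s i))
        + (y j:ℝ)/(a1 - s j) := by
      rw [hf]
      exact (Finset.sum_erase_add _ _ (Finset.mem_univ j)).symm
    have hj1 : (1:ℝ)/δ ≤ (y j:ℝ)/(a1 - s j) := by
      have : a1 - s j = δ := by simp [ha1def]
      rw [this]
      exact (div_le_div_iff_of_pos_right hδ0).2 (by exact_mod_cast hyj)
    have hδinv : (1:ℝ)/δ = 2*(M+1)/L := by
      rw [hδ, one_div_div]
    have hMb : M/(s k - a1) ≤ 2*M/L := by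
      have hL2 : L/2 ≤ s k - a1 := by
        simp only [ha1def]; simp only [hL] at hδL ⊢; linarith
      calc M/(s k - a1) ≤ M/(L/2) := by
            apply div_le_div_of_nonneg_left (by linarith) (by positivity) hL2
        _ = 2*M/L := by rw [div_div_eq_mul_div]; ring_nf
    have hfin : 2*(M+1)/L - 2*M/L = 2/L := by ring
    have h2L : (0:ℝ) < 2/L := by positivity
    rw [hsplit]
    linarith
  -- value at a2 is negative
  have hfa2 : f a2 < 0 := by
    have hsj2 : 0 < a2 - s j := by linarith
    have hbnd : ∀ i ∈ Finset.univ.erase k,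
        (y i:ℝ)/(a2 - s i) ≤ (y i:ℝ)/(a2 - s j) := by
      intro i _
      by_cases hyi : 1 ≤ y i
      · rcases hclass i hyi with h | h
        · have h1 : a2 - s j ≤ a2 - s i := by linarith
          rw [div_eq_mul_one_div ((y i:ℝ)), div_eq_mul_one_div ((y i:ℝ))]
          exact mul_le_mul_of_nonneg_left (one_div_le_one_div_of_le hsj2 h1) (hMnn i)
        · have h1 : a2 - s i < 0 := by linarith
          have h2 : (y i:ℝ)/(a2 - s i) ≤ 0 := div_nonpos_of_nonneg_of_nonpos (hMnn i) h1.le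
          have h3 : (0:ℝ) ≤ (y i:ℝ)/(a2 - s j) := div_nonneg (hMnn i) hsj2.le
          linarith
      · have hz : y i = 0 := by omega
        simp [hz]
    have hsum : ∑ i ∈ Finset.univ.erase k, (y i:ℝ)/(a2 - s i) ≤ M/(a2 - s j) := by
      have h1 : ∑ i ∈ Finset.univ.erase k, (y i:ℝ)/(a2 - s i)
          ≤ ∑ i ∈ Finset.univ.erase k, (y i:ℝ)/(a2 - s j) :=
        Finset.sum_le_sum hbnd
      have h2 : ∑ i ∈ Finset.univ.erase k, (y i:ℝ)/(a2 - s j)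
          = (∑ i ∈ Finset.univ.erase k, (y i:ℝ))/(a2 - s j) := by
        rw [Finset.sum_div]
      have h3 : ∑ i ∈ Finset.univ.erase k, (y i:ℝ) ≤ M := by
        apply Finset.sum_le_sum_of_subset_of_nonneg (Finset.erase_subset _ _)
        intro i _ _; exact hMnn i
      have h4 : (∑ i ∈ Finset.univ.erase k, (y i:ℝ))/(a2 - s j) ≤ M/(a2 - s j) :=
        (div_le_div_iff_of_pos_right hsj2).2 h3
      linarith
    have hsplit : f a2 = (∑ i ∈ Finset.univ.erase k, (y i:ℝ)/(a2 - s i))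
        + (y k:ℝ)/(a2 - s k) := by
      rw [hf]
      exact (Finset.sum_erase_add _ _ (Finset.mem_univ k)).symm
    have hj1 : (y k:ℝ)/(a2 - s k) ≤ -(1/δ) := by
      have hd : a2 - s k = -δ := by simp [ha2def]
      rw [hd, div_neg, neg_le_neg_iff]
      exact (div_le_div_iff_of_pos_right hδ0).2 (by exact_mod_cast hyk)
    have hδinv : (1:ℝ)/δ = 2*(M+1)/L := by
      rw [hδ, one_div_div]
    have hMb : M/(a2 - s j) ≤ 2*M/L := by
      have hL2 : L/2 ≤ a2 - s j := by
        simp only [ha2def]; simp only [hL] at hδL ⊢; linarith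
      calc M/(a2 - s j) ≤ M/(L/2) := by
            apply div_le_div_of_nonneg_left (by linarith) (by positivity) hL2
        _ = 2*M/L := by rw [div_div_eq_mul_div]; ring_nf
    have hfin : 2*M/L - 2*(M+1)/L = -(2/L) := by ring
    have h2L : (0:ℝ) < 2/L := by positivity
    rw [hsplit]
    linarith
  -- continuity on [a1, a2]
  have hsub : Set.Icc a1 a2 ⊆ Set.Ioo (s j) (s k) := fun a ha =>
    ⟨lt_of_lt_of_le ha1 ha.1, lt_of_le_of_lt ha.2 ha2'⟩
  have hcont : ContinuousOn f (Set.Icc a1 a2) := by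
    rw [hf]
    apply continuousOn_finset_sum
    intro i _
    by_cases hyi : 1 ≤ y i
    · apply ContinuousOn.div continuousOn_const
        ((continuous_id.sub continuous_const).continuousOn)
      intro a ha
      have ha' := hsub ha
      rcases hclass i hyi with h | h
      · have : 0 < a - s i := by linarith [ha'.1]
        exact this.ne'
      · have : a - s i < 0 := by linarith [ha'.2]
        exact this.ne
    · have hz : y i = 0 := by omega
      simp only [hz, Nat.cast_zero, zero_div]
      exact continuousOn_const
  -- IVT
  have hivt := intermediate_value_Icc' ha12.le hcont
  have h0mem : (0:ℝ) ∈ Set.Icc (f a2) (f a1) := ⟨hfa2.le, hfa1.le⟩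
  obtain ⟨a0, ha0, hfa0⟩ := hivt h0mem
  have ha0Ioo : a0 ∈ Set.Ioo (s j) (s k) := hsub ha0
  refine ⟨a0, ⟨ha0Ioo, by rw [hgf]; exact hfa0⟩, ?_⟩
  intro b hb
  have hbIoo : b ∈ Set.Ioo (s j) (s k) := hb.1
  have hfb : f b = 0 := by rw [← hgf]; exact hb.2
  exact hanti.injOn hbIoo ha0Ioo (by rw [hfb, hfa0])
end

section
/- Assume M ≥ 1 and R > 0. Let a_s be a real number with g(a_s) = 0 and 1 + a_s·(x_i − x_A) ≠ 0 for all i with y_i > 0. Then F(a) tends to −∞ as a tends to a_s from the left and F(a) tends to +∞ as a tends to a_s from the right. -/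
open Filter Set

set_option maxHeartbeats 1000000 in
/-- At a point of singularity `a_s` of `F`, i.e. a zero of `g` in the
domain of `g`, `F` tends to `-∞` from the left and to `+∞` from the right. -/
theorem cash_linear_F_singularity_limits
    (N : ℕ) (x : Fin N → ℝ) (xA xB R : ℝ)
    (hx : ∀ i, xA < x i ∧ x i < xB)
    (hR : R = xB - xA) (hRpos : 0 < R)
    (y : Fin N → ℕ) (hM : 1 ≤ ∑ i, y i)
    (g F : ℝ → ℝ)
    (hg : ∀ a, g a = ∑ i, (y i : ℝ) * (x i - xA) / (1 + a * (x i - xA)))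
    (hF : ∀ a, F a = 1 + (R / 2) * (a - (∑ i, (y i : ℝ)) / g a))
    (as : ℝ) (hdom : ∀ i, 0 < y i → 1 + as * (x i - xA) ≠ 0) (hgs : g as = 0) :
    Filter.Tendsto F (nhdsWithin as (Set.Iio as)) Filter.atBot ∧
    Filter.Tendsto F (nhdsWithin as (Set.Ioi as)) Filter.atTop := by
  have hb : ∀ i, 0 < x i - xA := fun i => sub_pos.2 (hx i).1
  set M : ℝ := ∑ i, (y i : ℝ) with hMdef
  have hMpos : 0 < M := by
    have : (1:ℝ) ≤ M := by
      rw [hMdef]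
      exact_mod_cast Nat.one_le_cast.2 (by exact_mod_cast hM : (1:ℕ) ≤ ∑ i, y i)
    linarith
  -- derivative of each term
  have hder : ∀ i, HasDerivAt (fun a => (y i : ℝ) * (x i - xA) / (1 + a * (x i - xA)))
      (-((y i : ℝ) * (x i - xA) * (x i - xA)) / (1 + as * (x i - xA))^2) as := by
    intro i
    rcases Nat.eq_zero_or_pos (y i) with h0 | hpos
    · simp only [h0, Nat.cast_zero, zero_mul, zero_div, neg_zero]
      exact hasDerivAt_const as 0
    · have hne := hdom i hpos
      have h1 : HasDerivAt (fun a : ℝ => 1 + a * (x i - xA)) (x i - xA) as := by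
        simpa using ((hasDerivAt_id as).mul_const (x i - xA)).const_add 1
      have h2 := (hasDerivAt_const as ((y i : ℝ) * (x i - xA))).div h1 hne
      exact h2.congr_deriv (by ring)
  set d : ℝ := ∑ i, -((y i : ℝ) * (x i - xA) * (x i - xA)) / (1 + as * (x i - xA))^2 with hddef
  have hgder : HasDerivAt g d as := by
    have h := HasDerivAt.fun_sum (fun i (_ : i ∈ Finset.univ) => hder i)
    have hgeq : g = fun a => ∑ i, (y i : ℝ) * (x i - xA) / (1 + a * (x i - xA)) := funext hg
    rw [hgeq]; exact h
  -- d < 0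
  have hdneg : d < 0 := by
    have hpos : (0:ℝ) < ∑ i, ((y i : ℝ) * (x i - xA) * (x i - xA)) / (1 + as * (x i - xA))^2 := by
      obtain ⟨i0, hi0⟩ : ∃ i, 0 < y i := by
        by_contra h
        push_neg at h
        have : ∑ i, y i = 0 := Finset.sum_eq_zero (fun i _ => Nat.le_zero.1 (h i))
        omega
      apply Finset.sum_pos'
      · intro i _
        rcases Nat.eq_zero_or_pos (y i) with h0 | hp
        · simp [h0]
        · apply div_nonneg
          · have := (hb i).le
            positivity
          · positivity
      · refine ⟨i0, Finset.mem_univ _, ?_⟩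
        apply div_pos
        · have hy : (0:ℝ) < (y i0 : ℝ) := by exact_mod_cast hi0
          have := hb i0
          positivity
        · exact (sq_nonneg _).lt_of_ne (Ne.symm (pow_ne_zero 2 (hdom i0 hi0)))
    have : d = -(∑ i, ((y i : ℝ) * (x i - xA) * (x i - xA)) / (1 + as * (x i - xA))^2) := by
      rw [hddef, ← Finset.sum_neg_distrib]
      exact Finset.sum_congr rfl (fun i _ => by rw [neg_div])
    rw [this]
    linarith
  -- slope eventually negative
  have hslope : Tendsto (slope g as) (nhdsWithin as {as}ᶜ) (nhds d) :=
    hasDerivAt_iff_tendsto_slope.1 hgder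
  have hslneg : ∀ᶠ a in nhdsWithin as {as}ᶜ, slope g as a < 0 :=
    hslope.eventually (Iio_mem_nhds hdneg)
  have hleft_le : nhdsWithin as (Iio as) ≤ nhdsWithin as {as}ᶜ :=
    nhdsWithin_mono as (fun a ha => ne_of_lt ha)
  have hright_le : nhdsWithin as (Ioi as) ≤ nhdsWithin as {as}ᶜ :=
    nhdsWithin_mono as (fun a ha => ne_of_gt ha)
  have hcont : Tendsto g (nhds as) (nhds 0) := by
    have := hgder.continuousAt.tendsto
    rwa [hgs] at this
  -- left: g positive
  have hgposL : ∀ᶠ a in nhdsWithin as (Iio as), 0 < g a := by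
    filter_upwards [hleft_le hslneg, self_mem_nhdsWithin] with a hsl ha
    have hlt : a - as < 0 := sub_neg.2 ha
    have h2 : (a - as)⁻¹ * g a < 0 := by
      simpa [slope, hgs] using hsl
    have hinv : (a - as)⁻¹ < 0 := inv_lt_zero.2 hlt
    by_contra hc
    push_neg at hc
    nlinarith
  have hgnegR : ∀ᶠ a in nhdsWithin as (Ioi as), g a < 0 := by
    filter_upwards [hright_le hslneg, self_mem_nhdsWithin] with a hsl ha
    have hlt : 0 < a - as := sub_pos.2 ha
    have h2 : (a - as)⁻¹ * g a < 0 := by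
      simpa [slope, hgs] using hsl
    have hinv : 0 < (a - as)⁻¹ := inv_pos.2 hlt
    by_contra hc
    push_neg at hc
    nlinarith
  -- left limit
  have hgL : Tendsto g (nhdsWithin as (Iio as)) (nhdsWithin 0 (Ioi 0)) :=
    tendsto_nhdsWithin_of_tendsto_nhds_of_eventually_within g
      (hcont.mono_left nhdsWithin_le_nhds) hgposL
  have hinvL : Tendsto (fun a => (g a)⁻¹) (nhdsWithin as (Iio as)) atTop :=
    hgL.inv_tendsto_nhdsGT_zero
  have hMdivL : Tendsto (fun a => M / g a) (nhdsWithin as (Iio as)) atTop := by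
    simpa [div_eq_mul_inv] using hinvL.const_mul_atTop hMpos
  have hidL : Tendsto (fun a : ℝ => a) (nhdsWithin as (Iio as)) (nhds as) :=
    tendsto_id.mono_left nhdsWithin_le_nhds
  have hL : Tendsto F (nhdsWithin as (Iio as)) atBot := by
    have hneg : Tendsto (fun a => -(M / g a)) (nhdsWithin as (Iio as)) atBot :=
      tendsto_neg_atBot_iff.mpr hMdivL
    have h1 : Tendsto (fun a => a - M / g a) (nhdsWithin as (Iio as)) atBot := by
      simpa [sub_eq_add_neg] using hidL.add_atBot hneg
    have h2 := tendsto_atBot_add_const_left (nhdsWithin as (Iio as)) 1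
      (h1.const_mul_atBot (by linarith : (0:ℝ) < R / 2))
    refine h2.congr (fun a => ?_)
    rw [hF a]
  -- right limit
  have hgR : Tendsto g (nhdsWithin as (Ioi as)) (nhdsWithin 0 (Iio 0)) :=
    tendsto_nhdsWithin_of_tendsto_nhds_of_eventually_within g
      (hcont.mono_left nhdsWithin_le_nhds) hgnegR
  have hnegR : Tendsto (fun a => -g a) (nhdsWithin as (Ioi as)) (nhdsWithin 0 (Ioi 0)) := by
    have h0 : Tendsto (fun a => -g a) (nhdsWithin as (Ioi as)) (nhds 0) := by
      simpa using (hgR.mono_right nhdsWithin_le_nhds).neg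
    refine tendsto_nhdsWithin_of_tendsto_nhds_of_eventually_within _ h0 ?_
    filter_upwards [hgnegR] with a ha using by simpa using ha
  have hinvR : Tendsto (fun a => (-g a)⁻¹) (nhdsWithin as (Ioi as)) atTop :=
    hnegR.inv_tendsto_nhdsGT_zero
  have hMdivR : Tendsto (fun a => -(M / g a)) (nhdsWithin as (Ioi as)) atTop := by
    have := hinvR.const_mul_atTop hMpos
    refine this.congr (fun a => ?_)
    rw [← div_eq_mul_inv, div_neg]
  have hidR : Tendsto (fun a : ℝ => a) (nhdsWithin as (Ioi as)) (nhds as) :=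
    tendsto_id.mono_left nhdsWithin_le_nhds
  have hRt : Tendsto F (nhdsWithin as (Ioi as)) atTop := by
    have h1 : Tendsto (fun a => a - M / g a) (nhdsWithin as (Ioi as)) atTop := by
      simpa [sub_eq_add_neg] using hidR.add_atTop hMdivR
    have h2 := tendsto_atTop_add_const_left (nhdsWithin as (Ioi as)) 1
      (h1.const_mul_atTop (by linarith : (0:ℝ) < R / 2))
    refine h2.congr (fun a => ?_)
    rw [hF a]
  exact ⟨hL, hRt⟩
end

section
/- Assume M ≥ 1. Then F(a) converges as a → +∞ and as a → −∞, and both limits equal F_∞ = 1 − (R/(2M))·Σ_{i=1}^N y_i/(x_i − x_A). -/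
open Filter Finset

private lemma aux_eq_inv (t a : ℝ) (ha : a ≠ 0) : (a⁻¹ + t)⁻¹ = a / (1 + a * t) := by
  have h : a⁻¹ + t = (1 + a * t) / a := by field_simp
  rw [h, inv_div]

private lemma aux_top (t : ℝ) (ht : t ≠ 0) :
    Tendsto (fun a : ℝ => a / (1 + a * t)) atTop (nhds t⁻¹) := by
  have h1 : Tendsto (fun a : ℝ => a⁻¹ + t) atTop (nhds (0 + t)) :=
    tendsto_inv_atTop_zero.add tendsto_const_nhds
  have h2 := h1.inv₀ (by simpa using ht)
  rw [zero_add] at h2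
  refine h2.congr' ?_
  filter_upwards [eventually_ne_atTop (0 : ℝ)] with a ha
  exact aux_eq_inv t a ha

private lemma aux_bot (t : ℝ) (ht : t ≠ 0) :
    Tendsto (fun a : ℝ => a / (1 + a * t)) atBot (nhds t⁻¹) := by
  have hinv : Tendsto (fun a : ℝ => a⁻¹) atBot (nhds 0) := by
    have h0 : Tendsto (fun a : ℝ => -a) atBot atTop := tendsto_neg_atBot_atTop
    have hc : Tendsto (fun a : ℝ => ((-a)⁻¹ : ℝ)) atBot (nhds 0) :=
      tendsto_inv_atTop_zero.comp h0
    have h2 := hc.neg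
    rw [neg_zero] at h2
    refine h2.congr fun a => ?_
    rw [inv_neg, neg_neg]
  have h1 : Tendsto (fun a : ℝ => a⁻¹ + t) atBot (nhds (0 + t)) :=
    hinv.add tendsto_const_nhds
  have h2 := h1.inv₀ (by simpa using ht)
  rw [zero_add] at h2
  refine h2.congr' ?_
  filter_upwards [eventually_ne_atBot (0 : ℝ)] with a ha
  exact aux_eq_inv t a ha

/-- For `M ≥ 1`, `F(a)` converges as `a → ±∞`, and both limits equal
`F_∞ = 1 - (R/(2M)) * ∑ i, y i / (x i - xA)`. -/
theorem cash_linear_F_asymptotic_limit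
    (N : ℕ) (x : Fin N → ℝ) (xA xB R : ℝ)
    (hx : ∀ i, xA < x i ∧ x i < xB)
    (hR : R = xB - xA) (hRpos : 0 < R)
    (y : Fin N → ℕ) (hM : 1 ≤ ∑ i, y i)
    (g F : ℝ → ℝ)
    (hg : ∀ a, g a = ∑ i, (y i : ℝ) * (x i - xA) / (1 + a * (x i - xA)))
    (hF : ∀ a, F a = 1 + (R / 2) * (a - (∑ i, (y i : ℝ)) / g a)) :
    Filter.Tendsto F Filter.atTop
      (nhds (1 - (R / (2 * ∑ i, (y i : ℝ))) * ∑ i, (y i : ℝ) / (x i - xA))) ∧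
    Filter.Tendsto F Filter.atBot
      (nhds (1 - (R / (2 * ∑ i, (y i : ℝ))) * ∑ i, (y i : ℝ) / (x i - xA))) := by
  set t : Fin N → ℝ := fun i => x i - xA with ht_def
  have ht : ∀ i, 0 < t i := fun i => sub_pos.2 (hx i).1
  set M : ℝ := ∑ i, (y i : ℝ) with hM_def
  have hMpos : 0 < M := by
    have : (1 : ℝ) ≤ M := by
      rw [hM_def]
      exact_mod_cast Nat.one_le_cast.mpr hM |>.trans_eq (Nat.cast_sum _ _)
    linarith
  obtain ⟨i0, hi0⟩ : ∃ i, 0 < y i := by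
    by_contra hcon
    push_neg at hcon
    have : ∑ i, y i = 0 := Finset.sum_eq_zero fun i _ => Nat.le_zero.mp (hcon i)
    omega
  set S : ℝ := ∑ i, (y i : ℝ) * (t i)⁻¹ with hS_def
  -- auxiliary functions
  set n : ℝ → ℝ := fun a => ∑ i, (y i : ℝ) * (a / (1 + a * t i)) with hn_def
  set d : ℝ → ℝ := fun a => ∑ i, (y i : ℝ) * (t i * (a / (1 + a * t i))) with hd_def
  have hn_top : Tendsto n atTop (nhds S) := by
    apply tendsto_finset_sum
    intro i _
    exact (aux_top (t i) (ht i).ne').const_mul _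
  have hn_bot : Tendsto n atBot (nhds S) := by
    apply tendsto_finset_sum
    intro i _
    exact (aux_bot (t i) (ht i).ne').const_mul _
  have hdlim : M = ∑ i, (y i : ℝ) * (t i * (t i)⁻¹) := by
    rw [hM_def]
    apply Finset.sum_congr rfl
    intro i _
    rw [mul_inv_cancel₀ (ht i).ne', mul_one]
  have hd_top : Tendsto d atTop (nhds M) := by
    rw [hdlim]
    apply tendsto_finset_sum
    intro i _
    exact ((aux_top (t i) (ht i).ne').const_mul _).const_mul _
  have hd_bot : Tendsto d atBot (nhds M) := by
    rw [hdlim]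
    apply tendsto_finset_sum
    intro i _
    exact ((aux_bot (t i) (ht i).ne').const_mul _).const_mul _
  -- the limit value
  have hlimval : 1 - R / 2 * (S / M) =
      1 - (R / (2 * M)) * ∑ i, (y i : ℝ) / (x i - xA) := by
    have : ∑ i, (y i : ℝ) / (x i - xA) = S := by
      rw [hS_def]
      exact Finset.sum_congr rfl fun i _ => div_eq_mul_inv _ _
    rw [this]
    field_simp
  have hG_top : Tendsto (fun a => 1 - R / 2 * (n a / d a)) atTop
      (nhds (1 - R / 2 * (S / M))) :=
    tendsto_const_nhds.sub (((hn_top.div hd_top hMpos.ne').const_mul _))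
  have hG_bot : Tendsto (fun a => 1 - R / 2 * (n a / d a)) atBot
      (nhds (1 - R / 2 * (S / M))) :=
    tendsto_const_nhds.sub (((hn_bot.div hd_bot hMpos.ne').const_mul _))
  -- key eventual equality ingredient
  have key : ∀ a : ℝ, a ≠ 0 → (∀ i, 1 + a * t i ≠ 0) → g a ≠ 0 →
      F a = 1 - R / 2 * (n a / d a) := by
    intro a ha hu hga
    set h : ℝ := ∑ i, (y i : ℝ) / (1 + a * t i) with hh_def
    have hag : a * g a = M - h := by
      rw [hg a, Finset.mul_sum, hM_def, hh_def, ← Finset.sum_sub_distrib]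
      apply Finset.sum_congr rfl
      intro i _
      have := hu i
      simp only [ht_def] at this ⊢
      field_simp
      ring
    have hda : d a = a * g a := by
      rw [hd_def, hg a, Finset.mul_sum]
      apply Finset.sum_congr rfl
      intro i _
      ring
    have hna : n a = a * h := by
      rw [hn_def, hh_def, Finset.mul_sum]
      apply Finset.sum_congr rfl
      intro i _
      ring
    have hratio : n a / d a = h / g a := by
      rw [hna, hda, mul_div_mul_left _ _ ha]
    rw [hF a, hratio]
    have hsub : a - M / g a = -(h / g a) := by
      field_simp
      linarith [hag]
    rw [hsub]
    ring
  constructor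
  · rw [← hlimval]
    refine hG_top.congr' ?_
    filter_upwards [eventually_gt_atTop (0 : ℝ)] with a ha
    have hu : ∀ i, (0 : ℝ) < 1 + a * t i := fun i => by nlinarith [ht i]
    have hga : 0 < g a := by
      rw [hg a]
      apply Finset.sum_pos'
      · intro i _
        exact div_nonneg (mul_nonneg (Nat.cast_nonneg _) (ht i).le) (hu i).le
      · exact ⟨i0, Finset.mem_univ i0,
          div_pos (mul_pos (by exact_mod_cast hi0) (ht i0)) (hu i0)⟩
    exact (key a ha.ne' (fun i => (hu i).ne') hga.ne').symm
  · rw [← hlimval]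
    refine hG_bot.congr' ?_
    have huev : ∀ i, ∀ᶠ a : ℝ in atBot, 1 + a * t i < 0 := by
      intro i
      have h1 : Tendsto (fun a : ℝ => 1 + a * t i) atBot atBot := by
        apply tendsto_atBot_add_const_left
        exact Tendsto.atBot_mul_const (ht i) tendsto_id
      exact h1.eventually (eventually_lt_atBot 0)
    filter_upwards [eventually_lt_atBot (0 : ℝ), eventually_all.2 huev] with a ha hu
    have hga : g a < 0 := by
      rw [hg a]
      have := Finset.sum_lt_sum (f := fun i => (y i : ℝ) * t i / (1 + a * t i))
        (g := fun _ => (0 : ℝ))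
        (fun i _ => by
          rw [div_nonpos_iff]
          exact Or.inl ⟨mul_nonneg (Nat.cast_nonneg _) (ht i).le, (hu i).le⟩)
        ⟨i0, Finset.mem_univ i0,
          div_neg_of_pos_of_neg (mul_pos (by exact_mod_cast hi0) (ht i0)) (hu i0)⟩
      simpa using this
    exact (key a ha.ne (fun i => (hu i).ne) hga.ne).symm
end

section
/- Assume M ≥ 1. At every real number a such that 1 + a·(x_i − x_A) ≠ 0 for all i with y_i > 0 and g(a) ≠ 0, the Cauchy–Schwarz inequality yields g'(a)/g(a)² ≤ −1/M, where g'(a) = −Σ_{i=1}^N y_i·(x_i − x_A)²/(1 + a·(x_i − x_A))². -/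
/-- For `M ≥ 1`, at every point `a` in the domain of `g` with `g a ≠ 0`,
the Cauchy–Schwarz inequality yields `g'(a) / g(a)^2 ≤ -1/M`, where
`g'(a) = -∑ i, y i * (x i - xA)^2 / (1 + a * (x i - xA))^2`. -/
theorem cash_linear_gprime_over_gsq_le
    (N : ℕ) (x : Fin N → ℝ) (xA xB : ℝ)
    (hx : ∀ i, xA < x i ∧ x i < xB)
    (y : Fin N → ℕ) (hM : 1 ≤ ∑ i, y i)
    (g : ℝ → ℝ)
    (hg : ∀ a, g a = ∑ i, (y i : ℝ) * (x i - xA) / (1 + a * (x i - xA)))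
    (a : ℝ) (ha : ∀ i, 0 < y i → 1 + a * (x i - xA) ≠ 0) (hga : g a ≠ 0) :
    (-∑ i, (y i : ℝ) * (x i - xA) ^ 2 / (1 + a * (x i - xA)) ^ 2) / (g a) ^ 2
      ≤ -1 / (∑ i, (y i : ℝ)) := by
  set M : ℝ := ∑ i, (y i : ℝ) with hMdef
  set S : ℝ := ∑ i, (y i : ℝ) * (x i - xA) ^ 2 / (1 + a * (x i - xA)) ^ 2 with hS
  have hMpos : 0 < M := by
    have : (1 : ℝ) ≤ M := by
      rw [hMdef, ← Nat.cast_sum]; exact_mod_cast hM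
    linarith
  have hg2 : (0 : ℝ) < (g a) ^ 2 := by positivity
  have key : (g a) ^ 2 ≤ M * S := by
    have cs := Finset.sum_mul_sq_le_sq_mul_sq Finset.univ
      (fun i => Real.sqrt (y i))
      (fun i => Real.sqrt (y i) * (x i - xA) / (1 + a * (x i - xA)))
    have e1 : ∀ i : Fin N, Real.sqrt (y i) *
        (Real.sqrt (y i) * (x i - xA) / (1 + a * (x i - xA)))
        = (y i : ℝ) * (x i - xA) / (1 + a * (x i - xA)) := by
      intro i
      rw [mul_div_assoc', ← mul_assoc, Real.mul_self_sqrt (by positivity)]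
    have e2 : ∀ i : Fin N, (Real.sqrt (y i)) ^ 2 = (y i : ℝ) := fun i =>
      Real.sq_sqrt (by positivity)
    have e3 : ∀ i : Fin N, (Real.sqrt (y i) * (x i - xA) / (1 + a * (x i - xA))) ^ 2
        = (y i : ℝ) * (x i - xA) ^ 2 / (1 + a * (x i - xA)) ^ 2 := by
      intro i
      rw [div_pow, mul_pow, Real.sq_sqrt (by positivity)]
    simp only [e1, e2, e3] at cs
    calc (g a) ^ 2 = (∑ i, (y i : ℝ) * (x i - xA) / (1 + a * (x i - xA))) ^ 2 := by
          rw [hg]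
      _ ≤ M * S := cs
  rw [neg_div, neg_div, neg_le_neg_iff, div_le_div_iff₀ (by positivity) hg2]
  nlinarith
end

section
/- Assume M ≥ 1 and R > 0. At every real number a such that 1 + a·(x_i − x_A) ≠ 0 for all i with y_i > 0 and g(a) ≠ 0, the function F is differentiable with F'(a) = R/2 + (M·R/2)·g'(a)/g(a)², and F'(a) ≤ 0. -/
/-- For `M ≥ 1` and `R > 0`, at every point `a` in the domain of `g` with
`g a ≠ 0`, `F` is differentiable with `F'(a) = R/2 + (M*R/2) * g'(a)/g(a)^2`,
and `F'(a) ≤ 0`, where `g'(a) = -∑ i, y i * (x i - xA)^2 / (1 + a * (x i - xA))^2`. -/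
theorem cash_linear_F_deriv_nonpos
    (N : ℕ) (x : Fin N → ℝ) (xA xB R : ℝ)
    (hx : ∀ i, xA < x i ∧ x i < xB)
    (hR : R = xB - xA) (hRpos : 0 < R)
    (y : Fin N → ℕ) (hM : 1 ≤ ∑ i, y i)
    (g F : ℝ → ℝ)
    (hg : ∀ a, g a = ∑ i, (y i : ℝ) * (x i - xA) / (1 + a * (x i - xA)))
    (hF : ∀ a, F a = 1 + (R / 2) * (a - (∑ i, (y i : ℝ)) / g a))
    (a : ℝ) (ha : ∀ i, 0 < y i → 1 + a * (x i - xA) ≠ 0) (hga : g a ≠ 0) :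
    HasDerivAt F (R / 2 + ((∑ i, (y i : ℝ)) * R / 2) *
      ((-∑ i, (y i : ℝ) * (x i - xA) ^ 2 / (1 + a * (x i - xA)) ^ 2) / (g a) ^ 2)) a ∧
    R / 2 + ((∑ i, (y i : ℝ)) * R / 2) *
      ((-∑ i, (y i : ℝ) * (x i - xA) ^ 2 / (1 + a * (x i - xA)) ^ 2) / (g a) ^ 2) ≤ 0 := by
  set M : ℝ := ∑ i, (y i : ℝ) with hMdef
  set S : ℝ := ∑ i, (y i : ℝ) * (x i - xA) ^ 2 / (1 + a * (x i - xA)) ^ 2 with hSdef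
  -- derivative of g
  have hg' : HasDerivAt g (-S) a := by
    have hfun : g = fun b => ∑ i, (y i : ℝ) * (x i - xA) / (1 + b * (x i - xA)) :=
      funext hg
    rw [hfun, hSdef, ← Finset.sum_neg_distrib]
    apply HasDerivAt.fun_sum
    intro i _
    by_cases hy : y i = 0
    · simpa [hy] using (hasDerivAt_const a (0 : ℝ))
    · have hne := ha i (Nat.pos_of_ne_zero hy)
      have h1 : HasDerivAt (fun b : ℝ => 1 + b * (x i - xA)) (x i - xA) a := by
        simpa using ((hasDerivAt_id a).mul_const (x i - xA)).const_add 1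
      have : HasDerivAt (fun b : ℝ => (y i : ℝ) * (x i - xA) / (1 + b * (x i - xA))) _ a :=
        (hasDerivAt_const a ((y i : ℝ) * (x i - xA))).fun_div h1 hne
      exact this.congr_deriv (by ring)
  constructor
  · have hFfun : F = fun b => 1 + (R / 2) * (b - M / g b) := funext hF
    rw [hFfun]
    have hd : HasDerivAt (fun b => M / g b) ((0 * g a - M * (-S)) / g a ^ 2) a :=
      (hasDerivAt_const a M).div hg' hga
    have : HasDerivAt (fun b => 1 + (R / 2) * (b - M / g b)) _ a := (((hasDerivAt_id a).sub hd).const_mul (R / 2)).const_add 1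
    convert this using 1
    field_simp
    ring
  · -- Cauchy–Schwarz: g a ^ 2 ≤ M * S
    have hcs : g a ^ 2 ≤ M * S := by
      have key := Finset.sum_mul_sq_le_sq_mul_sq Finset.univ
        (fun i => Real.sqrt (y i))
        (fun i => Real.sqrt (y i) * ((x i - xA) / (1 + a * (x i - xA))))
      have e1 : ∀ i : Fin N, Real.sqrt (y i) * (Real.sqrt (y i) *
          ((x i - xA) / (1 + a * (x i - xA)))) = (y i : ℝ) * (x i - xA) / (1 + a * (x i - xA)) := by
        intro i
        rw [← mul_assoc, Real.mul_self_sqrt (by positivity), mul_div_assoc]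
      have e2 : ∀ i : Fin N, (Real.sqrt (y i)) ^ 2 = (y i : ℝ) := fun i =>
        Real.sq_sqrt (by positivity)
      have e3 : ∀ i : Fin N, (Real.sqrt (y i) * ((x i - xA) / (1 + a * (x i - xA)))) ^ 2
          = (y i : ℝ) * (x i - xA) ^ 2 / (1 + a * (x i - xA)) ^ 2 := by
        intro i
        rw [mul_pow, e2, div_pow, mul_div_assoc]
      calc g a ^ 2 = (∑ i, Real.sqrt (y i) * (Real.sqrt (y i) *
            ((x i - xA) / (1 + a * (x i - xA))))) ^ 2 := by
            rw [hg a]; congr 1; exact (Finset.sum_congr rfl fun i _ => e1 i).symm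
        _ ≤ (∑ i, (Real.sqrt (y i)) ^ 2) *
            ∑ i, (Real.sqrt (y i) * ((x i - xA) / (1 + a * (x i - xA)))) ^ 2 := key
        _ = M * S := by
            rw [hMdef, hSdef]
            congr 1
            · exact Finset.sum_congr rfl fun i _ => e2 i
            · exact Finset.sum_congr rfl fun i _ => e3 i
    have hg2 : 0 < g a ^ 2 := by positivity
    have h1 : M * S / g a ^ 2 ≥ 1 := (one_le_div hg2).mpr hcs
    have : R / 2 + M * R / 2 * (-S / g a ^ 2) = (R / 2) * (1 - M * S / g a ^ 2) := by
      field_simp; ring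
    rw [this]
    have : 1 - M * S / g a ^ 2 ≤ 0 := by linarith
    nlinarith
end

section
/- Assume M ≥ 1, N ≥ 2, Δx_1 > 0, Δx_N > 0, Δx_1 + Δx_N ≤ R, and define λ(a) = M/(R·(1 + a·R/2)) for a ≠ −2/R. Then for every real a ≠ −2/R, the two conditions λ(a)·(1 + a·Δx_1/2) ≥ 0 and λ(a)·(1 + a·(R − Δx_N/2)) ≥ 0 hold simultaneously if and only if a does not lie in the open interval (−2/Δx_1, −1/(R − Δx_N/2)). -/
lemma aux_mul_nonneg_pos (c x : ℝ) (hc : 0 < c) : 0 ≤ c * x ↔ 0 ≤ x := by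
  constructor
  · intro h
    by_contra hx
    push_neg at hx
    nlinarith
  · intro h
    exact mul_nonneg hc.le h

lemma aux_mul_nonneg_neg (c x : ℝ) (hc : c < 0) : 0 ≤ c * x ↔ x ≤ 0 := by
  constructor
  · intro h
    by_contra hx
    push_neg at hx
    nlinarith
  · intro h
    nlinarith

/-- With `λ(a) = M / (R * (1 + a*R/2))`, for every `a ≠ -2/R` the
nonnegativity conditions `λ(a)*(1 + a*Δx₁/2) ≥ 0` and `λ(a)*(1 + a*(R - Δx_N/2)) ≥ 0`
hold simultaneously if and only if `a` lies outside the open interval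
`(-2/Δx₁, -1/(R - Δx_N/2))`. -/
theorem cash_linear_acceptability_interval
    (N : ℕ) (hN : 2 ≤ N) (M : ℕ) (hM : 1 ≤ M)
    (R Δx₁ ΔxN : ℝ) (hR : 0 < R) (hΔ₁ : 0 < Δx₁) (hΔN : 0 < ΔxN)
    (hsum : Δx₁ + ΔxN ≤ R)
    (lam : ℝ → ℝ) (hlam : ∀ a, lam a = (M : ℝ) / (R * (1 + a * R / 2))) :
    ∀ a : ℝ, a ≠ -2 / R →
      ((0 ≤ lam a * (1 + a * Δx₁ / 2) ∧ 0 ≤ lam a * (1 + a * (R - ΔxN / 2))) ↔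
        a ∉ Set.Ioo (-2 / Δx₁) (-1 / (R - ΔxN / 2))) := by
  intro a ha
  have hM' : (0:ℝ) < M := by exact_mod_cast hM
  have hB : 0 < R - ΔxN / 2 := by linarith
  have hΔ1R : Δx₁ < R := by linarith
  rw [hlam]
  simp only [Set.mem_Ioo, not_and, not_lt]
  rcases lt_trichotomy a (-2 / R) with hc | hc | hc
  · -- denominator negative
    have haR : a * R < -2 := (lt_div_iff₀ hR).mp hc
    have hD : 1 + a * R / 2 < 0 := by linarith
    have hlamneg : (M : ℝ) / (R * (1 + a * R / 2)) < 0 :=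
      div_neg_of_pos_of_neg hM' (by nlinarith)
    have h23 : -2 / R < -1 / (R - ΔxN / 2) := by
      rw [div_lt_div_iff₀ hR hB]; nlinarith
    have haB : a * (R - ΔxN / 2) < -1 := (lt_div_iff₀ hB).mp (lt_trans hc h23)
    rw [aux_mul_nonneg_neg _ _ hlamneg, aux_mul_nonneg_neg _ _ hlamneg]
    constructor
    · rintro ⟨h1, _⟩ hlt
      have : -2 < a * Δx₁ := (div_lt_iff₀ hΔ₁).mp hlt
      linarith
    · intro h
      have hle : a ≤ -2 / Δx₁ := by
        by_contra hx
        push_neg at hx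
        have := h hx
        have : a * (R - ΔxN / 2) ≥ -1 := by
          have := (div_le_iff₀ hB).mp this
          linarith
        linarith
      have : a * Δx₁ ≤ -2 := (le_div_iff₀ hΔ₁).mp hle
      exact ⟨by linarith, by linarith⟩
  · exact absurd hc ha
  · -- denominator positive
    have haR : -2 < a * R := (div_lt_iff₀ hR).mp hc
    have hD : 0 < 1 + a * R / 2 := by linarith
    have hlampos : 0 < (M : ℝ) / (R * (1 + a * R / 2)) :=
      div_pos hM' (by positivity)
    have h12 : -2 / Δx₁ < -2 / R := by
      rw [div_lt_div_iff₀ hΔ₁ hR]; nlinarith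
    have hgt : -2 / Δx₁ < a := lt_trans h12 hc
    rw [aux_mul_nonneg_pos _ _ hlampos, aux_mul_nonneg_pos _ _ hlampos]
    constructor
    · rintro ⟨_, h2⟩ _
      rw [div_le_iff₀ hB]
      linarith
    · intro h
      have := (div_le_iff₀ hB).mp (h hgt)
      have h1 : -2 < a * Δx₁ := (div_lt_iff₀ hΔ₁).mp hgt
      exact ⟨by linarith, by linarith⟩
end

section
/- Assume that every index i with y_i ≥ 1 satisfies Δx_1/2 ≤ x_i − x_A ≤ R − Δx_N/2, and that there exist at least two indices j ≠ k with y_j ≥ 1, y_k ≥ 1 and x_j ≠ x_k. Then every real number a with 1 + a·(x_i − x_A) ≠ 0 for all i with y_i > 0 and g(a) = 0 satisfies −2/Δx_1 < a < −1/(R − Δx_N/2). In particular, every solution of F(a) = 0 lying between two zeros of g is unacceptable, i.e., lies in the open interval (−2/Δx_1, −1/(R − Δx_N/2)). -/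
/-- If every counted bin center satisfies
`Δx₁/2 ≤ x i - xA ≤ R - Δx_N/2` and there are at least two counted bins with distinct
centers, then every zero of `g` (in the domain of `g`) lies strictly inside the interval
`(-2/Δx₁, -1/(R - Δx_N/2))`; in particular every solution of `F a = 0` lying between two
zeros of `g` is unacceptable, i.e. lies in this open interval. -/
theorem cash_linear_zeros_of_g_unacceptable
    (N : ℕ) (x : Fin N → ℝ) (xA R Δx₁ ΔxN : ℝ)
    (hΔ₁ : 0 < Δx₁) (hΔN : 0 < ΔxN) (hR : 0 < R)
    (y : Fin N → ℕ)
    (hpos : ∀ i, 1 ≤ y i → Δx₁ / 2 ≤ x i - xA ∧ x i - xA ≤ R - ΔxN / 2)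
    (j k : Fin N) (hjk : j ≠ k) (hyj : 1 ≤ y j) (hyk : 1 ≤ y k) (hxjk : x j ≠ x k)
    (g F : ℝ → ℝ)
    (hg : ∀ a, g a = ∑ i, (y i : ℝ) * (x i - xA) / (1 + a * (x i - xA)))
    (hF : ∀ a, F a = 1 + (R / 2) * (a - (∑ i, (y i : ℝ)) / g a)) :
    (∀ a, (∀ i, 0 < y i → 1 + a * (x i - xA) ≠ 0) → g a = 0 →
      -2 / Δx₁ < a ∧ a < -1 / (R - ΔxN / 2)) ∧
    (∀ a a₁ a₂,
      (∀ i, 0 < y i → 1 + a₁ * (x i - xA) ≠ 0) → g a₁ = 0 →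
      (∀ i, 0 < y i → 1 + a₂ * (x i - xA) ≠ 0) → g a₂ = 0 →
      a₁ < a → a < a₂ → F a = 0 →
      -2 / Δx₁ < a ∧ a < -1 / (R - ΔxN / 2)) := by
  have key : ∀ a, (∀ i, 0 < y i → 1 + a * (x i - xA) ≠ 0) → g a = 0 →
      -2 / Δx₁ < a ∧ a < -1 / (R - ΔxN / 2) := by
    intro a hden hga
    rw [hg] at hga
    have htj := hpos j hyj
    have hjy : (0:ℝ) < (y j : ℝ) := by exact_mod_cast hyj
    have hjx : 0 < x j - xA := lt_of_lt_of_le (half_pos hΔ₁) htj.1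
    have hex_pos : ∃ p, 0 < y p ∧ 0 < 1 + a * (x p - xA) := by
      by_contra h
      push_neg at h
      have hneg : ∀ i, 0 < y i → 1 + a * (x i - xA) < 0 := fun i hi =>
        lt_of_le_of_ne (h i hi) (hden i hi)
      have hlt : (∑ i, (y i : ℝ) * (x i - xA) / (1 + a * (x i - xA)))
          < ∑ _i : Fin N, (0:ℝ) := by
        refine Finset.sum_lt_sum ?_ ⟨j, Finset.mem_univ j, ?_⟩
        · intro i _
          rcases Nat.eq_zero_or_pos (y i) with h0 | h1
          · simp [h0]
          · have ht := hpos i h1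
            have hx : 0 < x i - xA := lt_of_lt_of_le (half_pos hΔ₁) ht.1
            have hy : (0:ℝ) < (y i : ℝ) := by exact_mod_cast h1
            exact le_of_lt (div_neg_of_pos_of_neg (mul_pos hy hx) (hneg i h1))
        · exact div_neg_of_pos_of_neg (mul_pos hjy hjx) (hneg j hyj)
      simp only [Finset.sum_const_zero] at hlt
      linarith
    have hex_neg : ∃ q, 0 < y q ∧ 1 + a * (x q - xA) < 0 := by
      by_contra h
      push_neg at h
      have hposd : ∀ i, 0 < y i → 0 < 1 + a * (x i - xA) := fun i hi =>
        lt_of_le_of_ne (h i hi) (Ne.symm (hden i hi))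
      have hlt : (∑ _i : Fin N, (0:ℝ))
          < ∑ i, (y i : ℝ) * (x i - xA) / (1 + a * (x i - xA)) := by
        refine Finset.sum_lt_sum ?_ ⟨j, Finset.mem_univ j, ?_⟩
        · intro i _
          rcases Nat.eq_zero_or_pos (y i) with h0 | h1
          · simp [h0]
          · have ht := hpos i h1
            have hx : 0 < x i - xA := lt_of_lt_of_le (half_pos hΔ₁) ht.1
            have hy : (0:ℝ) < (y i : ℝ) := by exact_mod_cast h1
            exact le_of_lt (div_pos (mul_pos hy hx) (hposd i h1))
        · exact div_pos (mul_pos hjy hjx) (hposd j hyj)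
      simp only [Finset.sum_const_zero] at hlt
      linarith
    obtain ⟨p, hp, hpd⟩ := hex_pos
    obtain ⟨q, hq, hqd⟩ := hex_neg
    have htp := hpos p hp
    have htq := hpos q hq
    have hqx : 0 < x q - xA := lt_of_lt_of_le (half_pos hΔ₁) htq.1
    have hTpos : 0 < R - ΔxN / 2 := lt_of_lt_of_le hqx htq.2
    have haneg : a < 0 := by nlinarith
    constructor
    · have h1 : a * (x p - xA) ≤ a * (Δx₁ / 2) :=
        mul_le_mul_of_nonpos_left htp.1 haneg.le
      have h2 : -2 < a * Δx₁ := by nlinarith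
      exact (div_lt_iff₀ hΔ₁).mpr h2
    · have h1 : a * (R - ΔxN / 2) ≤ a * (x q - xA) :=
        mul_le_mul_of_nonpos_left htq.2 haneg.le
      have h2 : a * (R - ΔxN / 2) < -1 := by linarith
      exact (lt_div_iff₀ hTpos).mpr h2
  refine ⟨key, ?_⟩
  intro a a₁ a₂ hd1 hg1 hd2 hg2 h1 h2 _
  obtain ⟨hl1, _⟩ := key a₁ hd1 hg1
  obtain ⟨_, hr2⟩ := key a₂ hd2 hg2
  exact ⟨lt_trans hl1 h1, lt_trans h2 hr2⟩
end

section
/- Assume M ≥ 1. Let j be an index with y_j ≥ 1 such that x_j ≠ x_i for every other index i with y_i ≥ 1, and set a_j = −1/(x_j − x_A). Then F(a) tends to 1 + a_j·R/2 as a tends to a_j (from either side); that is, the limit of F at each singularity of g equals 1 + a_j·R/2. -/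
/-- For `M ≥ 1`, at a singularity `a_j = -1/(x j - xA)` of `g`
(bin `j` carries a count and no other counted bin shares its center),
`F(a)` tends to `1 + a_j * R / 2` as `a → a_j` (from either side). -/
theorem cash_linear_F_limit_at_g_singularity
    (N : ℕ) (x : Fin N → ℝ) (xA xB R : ℝ)
    (hx : ∀ i, xA < x i ∧ x i < xB)
    (hR : R = xB - xA) (hRpos : 0 < R)
    (y : Fin N → ℕ) (hM : 1 ≤ ∑ i, y i)
    (j : Fin N) (hyj : 1 ≤ y j)
    (hunique : ∀ i, i ≠ j → 1 ≤ y i → x i ≠ x j)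
    (g F : ℝ → ℝ)
    (hg : ∀ a, g a = ∑ i, (y i : ℝ) * (x i - xA) / (1 + a * (x i - xA)))
    (hF : ∀ a, F a = 1 + (R / 2) * (a - (∑ i, (y i : ℝ)) / g a)) :
    Filter.Tendsto F (nhdsWithin (-1 / (x j - xA)) {(-1 / (x j - xA))}ᶜ)
      (nhds (1 + (-1 / (x j - xA)) * R / 2)) := by
  set d : ℝ := x j - xA with hdd
  have hd : 0 < d := sub_pos.2 (hx j).1
  have hd' : d ≠ 0 := ne_of_gt hd
  set aj : ℝ := -1 / d with haj
  set t : Fin N → ℝ → ℝ := fun i a => (y i : ℝ) * (x i - xA) / (1 + a * (x i - xA))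
    with ht
  set h : ℝ → ℝ := fun a => ∑ i ∈ Finset.univ.erase j, t i a with hh
  have hgsplit : ∀ a, g a = t j a + h a := by
    intro a
    rw [hg, hh]
    exact (Finset.add_sum_erase _ _ (Finset.mem_univ j)).symm
  -- the j-th term is (y j) / (a - aj)
  have htj : ∀ a, t j a = (y j : ℝ) / (a - aj) := by
    intro a
    have h1 : 1 + a * d = d * (a - aj) := by
      rw [haj, mul_sub d a, mul_div_assoc', mul_neg_one, neg_div, div_self hd']
      ring
    simp only [ht, ← hdd, h1]
    rw [mul_comm ((y j : ℝ)) d, mul_div_mul_left _ _ hd']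
  -- the rest tends to its value at aj
  have hhcont : Filter.Tendsto h (nhdsWithin aj {aj}ᶜ) (nhds (h aj)) := by
    apply Filter.Tendsto.mono_left _ nhdsWithin_le_nhds
    rw [hh]
    apply tendsto_finset_sum
    intro i hi
    have hij : i ≠ j := Finset.ne_of_mem_erase hi
    rcases Nat.eq_zero_or_pos (y i) with h0 | h1
    · simp only [ht, h0, Nat.cast_zero, zero_mul, zero_div]
      exact tendsto_const_nhds
    · have hden : 1 + aj * (x i - xA) ≠ 0 := by
        intro hcon
        apply hunique i hij h1
        rw [haj] at hcon
        have : x i - xA = d := by field_simp at hcon; linarith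
        rw [hdd] at this
        linarith
      exact Filter.Tendsto.div tendsto_const_nhds
        (Filter.Tendsto.const_add _ (Filter.Tendsto.mul_const _ Filter.tendsto_id)) hden
  -- |t j| tends to atTop
  have hsub : Filter.Tendsto (fun a : ℝ => a - aj) (nhdsWithin aj {aj}ᶜ)
      (nhdsWithin 0 {(0:ℝ)}ᶜ) := by
    apply tendsto_nhdsWithin_of_tendsto_nhds_of_eventually_within
    · have h2 : Filter.Tendsto (fun a : ℝ => a - aj) (nhds aj) (nhds (aj - aj)) :=
        Filter.tendsto_id.sub_const aj
      simpa using h2.mono_left nhdsWithin_le_nhds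
    · filter_upwards [self_mem_nhdsWithin] with a ha
      simp only [Set.mem_compl_iff, Set.mem_singleton_iff] at ha ⊢
      simpa [sub_eq_zero] using ha
  have habs : Filter.Tendsto (fun a : ℝ => |a - aj|) (nhdsWithin aj {aj}ᶜ)
      (nhdsWithin 0 (Set.Ioi 0)) := by
    have := tendsto_abs_nhdsNE_zero.comp hsub
    simpa [Function.comp_def] using this
  have htjatop : Filter.Tendsto (fun a => |t j a|) (nhdsWithin aj {aj}ᶜ)
      Filter.atTop := by
    have hyj0 : (0:ℝ) < (y j : ℝ) := by exact_mod_cast hyj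
    have hinv : Filter.Tendsto (fun a : ℝ => |a - aj|⁻¹) (nhdsWithin aj {aj}ᶜ)
        Filter.atTop := tendsto_inv_nhdsGT_zero.comp habs
    have := Filter.Tendsto.const_mul_atTop hyj0 hinv
    apply this.congr
    intro a
    rw [htj, abs_div, abs_of_nonneg (by positivity : (0:ℝ) ≤ (y j : ℝ)),
      div_eq_mul_inv]
  -- |g| tends to atTop
  have hgatop : Filter.Tendsto (fun a => |g a|) (nhdsWithin aj {aj}ᶜ)
      Filter.atTop := by
    have hkey : ∀ a, |t j a| - |h a| ≤ |g a| := by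
      intro a
      have h1 : t j a = g a + -(h a) := by rw [hgsplit a]; ring
      have h2 : |t j a| ≤ |g a| + |h a| := by
        rw [h1]
        calc |g a + -(h a)| ≤ |g a| + |-(h a)| := abs_add_le _ _
        _ = |g a| + |h a| := by rw [abs_neg]
      linarith
    have hlow : Filter.Tendsto (fun a => |t j a| - |h a|) (nhdsWithin aj {aj}ᶜ)
        Filter.atTop := by
      have hnh : Filter.Tendsto (fun a => -|h a|) (nhdsWithin aj {aj}ᶜ)
          (nhds (-|h aj|)) := (hhcont.abs).neg
      simpa [sub_eq_add_neg, add_comm] using hnh.add_atTop htjatop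
    exact Filter.tendsto_atTop_mono hkey hlow
  -- 1/g tends to 0
  have hginv : Filter.Tendsto (fun a => (g a)⁻¹) (nhdsWithin aj {aj}ᶜ) (nhds 0) := by
    rw [tendsto_zero_iff_norm_tendsto_zero]
    have := Filter.Tendsto.inv_tendsto_atTop hgatop
    apply this.congr
    intro a
    simp [Real.norm_eq_abs, abs_inv]
  have hMg : Filter.Tendsto (fun a => (∑ i, (y i : ℝ)) / g a) (nhdsWithin aj {aj}ᶜ)
      (nhds 0) := by
    simp only [div_eq_mul_inv]
    simpa using hginv.const_mul (∑ i, (y i : ℝ))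
  have hid : Filter.Tendsto (fun a : ℝ => a) (nhdsWithin aj {aj}ᶜ) (nhds aj) :=
    Filter.Tendsto.mono_left Filter.tendsto_id nhdsWithin_le_nhds
  have hfinal : Filter.Tendsto F (nhdsWithin aj {aj}ᶜ)
      (nhds (1 + (R / 2) * (aj - 0))) := by
    have := ((hid.sub hMg).const_mul (R / 2)).const_add 1
    apply this.congr
    intro a
    rw [hF]
  have : (1 + (R / 2) * (aj - 0)) = 1 + aj * R / 2 := by ring
  rw [this] at hfinal
  exact hfinal
end

section
/- Assume: the first bin carries a count, y_1 ≥ 1 with x_1 − x_A = Δx_1/2; every index i with y_i ≥ 1 satisfies Δx_1/2 ≤ x_i − x_A ≤ R − Δx_N/2; there are at least two indices with positive counts at distinct centers; R > Δx_1; and the asymptotic value F_∞ = 1 − (R/(2M))·Σ_{i=1}^N y_i/(x_i − x_A) is strictly positive. Then there exists a real number a < −2/Δx_1 such that 1 + a·(x_i − x_A) ≠ 0 for all i with y_i > 0, g(a) ≠ 0, and F(a) = 0; i.e., the external solution of F(a) = 0 exists and is acceptable. -/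
open Filter Set Topology

set_option maxHeartbeats 1000000

private lemma inv_tendsto_atBot_zero : Filter.Tendsto (fun r : ℝ => r⁻¹) Filter.atBot (nhds 0) := by
  have h := (tendsto_inv_atTop_zero (𝕜 := ℝ)).comp tendsto_neg_atBot_atTop
  have h2 := h.neg
  simp only [Function.comp_def, ← inv_neg, neg_neg, neg_zero] at h2
  exact h2

/-- If the first bin carries a count (`y j ≥ 1` with
`x j - xA = Δx₁/2`), all counted centers satisfy `Δx₁/2 ≤ x i - xA ≤ R - Δx_N/2`,
there are two counted bins with distinct centers, `R > Δx₁`, and the asymptotic value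
`F_∞ = 1 - (R/(2M)) * ∑ i, y i/(x i - xA)` is strictly positive, then the external
solution of `F a = 0` exists and is acceptable: there is `a < -2/Δx₁` in the domain of
`F` with `F a = 0`. -/
theorem cash_linear_external_solution_left
    (N : ℕ) (x : Fin N → ℝ) (xA R Δx₁ ΔxN : ℝ)
    (hΔ₁ : 0 < Δx₁) (hΔN : 0 < ΔxN) (hRΔ : Δx₁ < R)
    (y : Fin N → ℕ)
    (hpos : ∀ i, 1 ≤ y i → Δx₁ / 2 ≤ x i - xA ∧ x i - xA ≤ R - ΔxN / 2)
    (j : Fin N) (hyj : 1 ≤ y j) (hxj : x j - xA = Δx₁ / 2)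
    (k l : Fin N) (hkl : k ≠ l) (hyk : 1 ≤ y k) (hyl : 1 ≤ y l) (hxkl : x k ≠ x l)
    (g F : ℝ → ℝ)
    (hg : ∀ a, g a = ∑ i, (y i : ℝ) * (x i - xA) / (1 + a * (x i - xA)))
    (hF : ∀ a, F a = 1 + (R / 2) * (a - (∑ i, (y i : ℝ)) / g a))
    (hFinf : 0 < 1 - (R / (2 * ∑ i, (y i : ℝ))) * ∑ i, (y i : ℝ) / (x i - xA)) :
    ∃ a, a < -2 / Δx₁ ∧ (∀ i, 0 < y i → 1 + a * (x i - xA) ≠ 0) ∧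
      g a ≠ 0 ∧ F a = 0 := by
  set c : ℝ := -2 / Δx₁ with hc
  have hR : 0 < R := lt_trans hΔ₁ hRΔ
  have hc0 : c < 0 := div_neg_of_neg_of_pos (by norm_num) hΔ₁
  set M : ℝ := ∑ i, (y i : ℝ) with hM
  have hM1 : (1 : ℝ) ≤ M := by
    calc (1 : ℝ) ≤ (y j : ℝ) := by exact_mod_cast hyj
    _ ≤ M := Finset.single_le_sum (f := fun i => (y i : ℝ))
        (fun i _ => by positivity) (Finset.mem_univ j)
  have hMpos : (0 : ℝ) < M := lt_of_lt_of_le one_pos hM1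
  -- denominators negative on Iio c
  have hdenom : ∀ a < c, ∀ i, 1 ≤ y i → 1 + a * (x i - xA) < 0 := by
    intro a ha i hyi
    have hd : Δx₁ / 2 ≤ x i - xA := (hpos i hyi).1
    have haΔ : a * Δx₁ < -2 := by
      have := (lt_div_iff₀ hΔ₁).mp ha
      linarith
    have ha0 : a ≤ 0 := le_of_lt (lt_trans ha hc0)
    nlinarith [mul_le_mul_of_nonpos_left hd ha0]
  -- each summand of g is nonpositive on Iio c
  have hterm : ∀ a < c, ∀ i : Fin N, (y i : ℝ) * (x i - xA) / (1 + a * (x i - xA)) ≤ 0 := by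
    intro a ha i
    rcases Nat.eq_zero_or_pos (y i) with h0 | h1
    · simp [h0]
    · apply div_nonpos_iff.mpr
      exact Or.inl ⟨by nlinarith [(hpos i h1).1, (hΔ₁ : (0:ℝ) < Δx₁)], le_of_lt (hdenom a ha i h1)⟩
  -- g bounded above by the j-th term
  have hgle : ∀ a < c, g a ≤ (y j : ℝ) * (Δx₁ / 2) / (1 + a * (Δx₁ / 2)) := by
    intro a ha
    have hjterm : (y j : ℝ) * (x j - xA) / (1 + a * (x j - xA))
        = (y j : ℝ) * (Δx₁ / 2) / (1 + a * (Δx₁ / 2)) := by rw [hxj]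
    rw [hg, ← hjterm,
      ← Finset.sum_erase_add Finset.univ
        (fun i => (y i : ℝ) * (x i - xA) / (1 + a * (x i - xA))) (Finset.mem_univ j)]
    have hnp : (∑ i ∈ Finset.univ.erase j,
        (y i : ℝ) * (x i - xA) / (1 + a * (x i - xA))) ≤ 0 :=
      Finset.sum_nonpos (fun i _ => hterm a ha i)
    simpa using hnp
  have hdj : ∀ a < c, 1 + a * (Δx₁ / 2) < 0 := by
    intro a ha
    have := hdenom a ha j hyj
    rwa [hxj] at this
  have hglt : ∀ a < c, g a < 0 := by
    intro a ha
    refine lt_of_le_of_lt (hgle a ha) (div_neg_of_pos_of_neg ?_ (hdj a ha))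
    have : (1 : ℝ) ≤ (y j : ℝ) := by exact_mod_cast hyj
    nlinarith
  -- limit of F at -∞
  set S : ℝ := ∑ i, (y i : ℝ) / (x i - xA) with hS
  set p : ℝ → ℝ := fun a => ∑ i, (y i : ℝ) * (a⁻¹ + (x i - xA))⁻¹ with hp
  set q : ℝ → ℝ := fun a => ∑ i, (y i : ℝ) * ((x i - xA) / (a⁻¹ + (x i - xA))) with hq
  have hptend : Tendsto p atBot (𝓝 S) := by
    rw [hp, hS]
    apply tendsto_finset_sum
    intro i _
    rcases Nat.eq_zero_or_pos (y i) with h0 | h1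
    · simp [h0]
    · have hd : (0 : ℝ) < x i - xA := lt_of_lt_of_le (by positivity) (hpos i h1).1
      have h1t : Tendsto (fun a : ℝ => a⁻¹ + (x i - xA)) atBot (𝓝 (0 + (x i - xA))) :=
        inv_tendsto_atBot_zero.add tendsto_const_nhds
      have h2 := (h1t.inv₀ (by rw [zero_add]; exact hd.ne')).const_mul ((y i : ℝ))
      rw [zero_add] at h2
      simpa [div_eq_mul_inv] using h2
  have hqtend : Tendsto q atBot (𝓝 M) := by
    rw [hq, hM]
    apply tendsto_finset_sum
    intro i _
    rcases Nat.eq_zero_or_pos (y i) with h0 | h1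
    · simp [h0]
    · have hd : (0 : ℝ) < x i - xA := lt_of_lt_of_le (by positivity) (hpos i h1).1
      have h1t : Tendsto (fun a : ℝ => a⁻¹ + (x i - xA)) atBot (𝓝 (0 + (x i - xA))) :=
        inv_tendsto_atBot_zero.add tendsto_const_nhds
      have h2 := ((tendsto_const_nhds (α := ℝ) (x := (x i - xA))).div h1t
        (by rw [zero_add]; exact hd.ne')).const_mul ((y i : ℝ))
      rw [zero_add, div_self hd.ne'] at h2
      simpa using h2
  -- identities on Iio c
  have hqeq : ∀ a < c, q a = a * g a := by
    intro a ha
    have ha0 : a ≠ 0 := ne_of_lt (lt_trans ha hc0)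
    rw [hq, hg, Finset.mul_sum]
    apply Finset.sum_congr rfl
    intro i _
    have hrw : a⁻¹ + (x i - xA) = (1 + a * (x i - xA)) / a := by field_simp
    rw [hrw, div_div_eq_mul_div]
    ring
  have hpeq : ∀ a < c, p a = a * M - a ^ 2 * g a := by
    intro a ha
    have ha0 : a ≠ 0 := ne_of_lt (lt_trans ha hc0)
    rw [hp, hg, hM, Finset.mul_sum, Finset.mul_sum, ← Finset.sum_sub_distrib]
    apply Finset.sum_congr rfl
    intro i _
    rcases Nat.eq_zero_or_pos (y i) with h0 | h1
    · simp [h0]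
    · have hden : 1 + a * (x i - xA) ≠ 0 := ne_of_lt (hdenom a ha i h1)
      have hrw : a⁻¹ + (x i - xA) = (1 + a * (x i - xA)) / a := by field_simp
      rw [hrw, inv_div]
      field_simp
      ring
  have hFeq : ∀ a < c, F a = 1 + (R / 2) * (-(p a / q a)) := by
    intro a ha
    have ha0 : a ≠ 0 := ne_of_lt (lt_trans ha hc0)
    have hga : g a ≠ 0 := ne_of_lt (hglt a ha)
    rw [hF, hqeq a ha, hpeq a ha]
    congr 1
    congr 1
    field_simp
    ring
  have hFinf' : 0 < 1 + (R / 2) * (-(S / M)) := by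
    have heq : 1 + (R / 2) * (-(S / M)) = 1 - R / (2 * M) * S := by
      field_simp; ring
    rw [heq]
    exact hFinf
  have hFtend : Tendsto F atBot (𝓝 (1 + (R / 2) * (-(S / M)))) := by
    have base : Tendsto (fun a => 1 + (R / 2) * (-(p a / q a))) atBot
        (𝓝 (1 + (R / 2) * (-(S / M)))) :=
      (((hptend.div hqtend hMpos.ne').neg).const_mul (R / 2)).const_add 1
    apply base.congr'
    filter_upwards [eventually_lt_atBot c] with a ha
    exact (hFeq a ha).symm
  have hev : ∀ᶠ a in atBot, 0 < F a := hFtend.eventually (eventually_gt_nhds hFinf')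
  -- explicit point a₁ where F < 0
  set δ : ℝ := R / Δx₁ - 1 with hδ
  have hδpos : 0 < δ := by
    have : 1 < R / Δx₁ := (one_lt_div hΔ₁).mpr hRΔ
    simp [hδ]; linarith
  set ε : ℝ := δ / (R * M) with hε
  have hεpos : 0 < ε := div_pos hδpos (mul_pos hR hMpos)
  set a₁ : ℝ := c - ε with ha₁
  have ha₁c : a₁ < c := by rw [ha₁]; linarith
  have hd₁ : 1 + a₁ * (Δx₁ / 2) = -(ε * Δx₁ / 2) := by
    rw [ha₁, hc]; field_simp; ring
  have hga₁ : g a₁ ≤ -(1 / ε) := by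
    refine le_trans (hgle a₁ ha₁c) ?_
    rw [hd₁]
    have hyj1 : (1 : ℝ) ≤ (y j : ℝ) := by exact_mod_cast hyj
    have hrw : (y j : ℝ) * (Δx₁ / 2) / (-(ε * Δx₁ / 2)) = -((y j : ℝ) / ε) := by
      field_simp
    rw [hrw, neg_le_neg_iff]
    gcongr
  have hFa₁ : F a₁ < 0 := by
    have hga₁0 : g a₁ < 0 := hglt a₁ ha₁c
    have hinv : -(M * ε) ≤ M / g a₁ := by
      have h1 : M / g a₁ = -(M / (-(g a₁))) := by
        rw [div_neg, neg_neg]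
      have h2 : M / (-(g a₁)) ≤ M / (1 / ε) := by
        apply div_le_div_of_nonneg_left hMpos.le (by positivity)
        linarith
      have h3 : M / (1 / ε) = M * ε := by field_simp
      rw [h1]
      linarith
    have hstep : F a₁ ≤ 1 + (R / 2) * (a₁ + M * ε) := by
      rw [hF]
      have h4 : a₁ - M / g a₁ ≤ a₁ + M * ε := by linarith
      have h5 := mul_le_mul_of_nonneg_left h4 (by positivity : (0:ℝ) ≤ R / 2)
      linarith
    have h1c : 1 + (R / 2) * c = -δ := by
      rw [hc, hδ]; field_simp; ring
    have hkey : (R / 2) * ((M - 1) * ε) = (M - 1) * δ / (2 * M) := by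
      rw [hε]; field_simp
    have hlt : (M - 1) * δ / (2 * M) < δ := by
      rw [div_lt_iff₀ (by positivity)]
      have h6 : δ ≤ M * δ := le_mul_of_one_le_left hδpos.le hM1
      linarith
    have : 1 + (R / 2) * (a₁ + M * ε) = (1 + (R / 2) * c) + (R / 2) * ((M - 1) * ε) := by
      rw [ha₁]; ring
    linarith [hstep, this, h1c, hkey, hlt, hδpos]
  -- pick a₀ < a₁ with F a₀ > 0
  obtain ⟨a₀, hFa₀, ha₀₁⟩ := (hev.and (eventually_lt_atBot a₁)).exists
  -- continuity of F on [a₀, a₁]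
  have hsub : Icc a₀ a₁ ⊆ Iio c := fun t ht => lt_of_le_of_lt ht.2 ha₁c
  have hgcont : ContinuousOn g (Iio c) := by
    rw [show g = fun a => ∑ i, (y i : ℝ) * (x i - xA) / (1 + a * (x i - xA)) from funext hg]
    apply continuousOn_finset_sum
    intro i _
    rcases Nat.eq_zero_or_pos (y i) with h0 | h1
    · simp only [h0, Nat.cast_zero, zero_mul, zero_div]
      exact continuousOn_const
    · exact ContinuousOn.div continuousOn_const
        (by fun_prop)
        (fun a ha => ne_of_lt (hdenom a ha i h1))
  have hFcontIio : ContinuousOn F (Iio c) := by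
    rw [show F = fun a => 1 + (R / 2) * (a - M / g a) from funext hF]
    exact continuousOn_const.add (continuousOn_const.mul (continuousOn_id.sub
      (continuousOn_const.div hgcont (fun a ha => ne_of_lt (hglt a ha)))))
  have hFcont : ContinuousOn F (Icc a₀ a₁) := hFcontIio.mono hsub
  have hmem : (0 : ℝ) ∈ Icc (F a₁) (F a₀) := ⟨le_of_lt hFa₁, le_of_lt hFa₀⟩
  obtain ⟨a, haI, haF⟩ := intermediate_value_Icc' (le_of_lt ha₀₁) hFcont hmem
  have hac : a < c := lt_of_le_of_lt haI.2 ha₁c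
  exact ⟨a, hac, fun i hi => ne_of_lt (hdenom a hac i hi),
    ne_of_lt (hglt a hac), haF⟩
end

section
/- Assume: the last bin carries a count, y_N ≥ 1 with x_N − x_A = R − Δx_N/2; every index i with y_i ≥ 1 satisfies Δx_1/2 ≤ x_i − x_A ≤ R − Δx_N/2; there are at least two indices with positive counts at distinct centers; R > Δx_N; and the asymptotic value F_∞ = 1 − (R/(2M))·Σ_{i=1}^N y_i/(x_i − x_A) is strictly negative. Then there exists a real number a > −1/(R − Δx_N/2) such that 1 + a·(x_i − x_A) ≠ 0 for all i with y_i > 0, g(a) ≠ 0, and F(a) = 0; i.e., the external solution of F(a) = 0 exists and is acceptable. -/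
private lemma aux_term_left (yi d R c' den : ℝ) (hy : 1 ≤ yi) (hd : 0 < d) (hR : 0 < R)
    (hc' : 0 < c') (hden : 0 < den) (hcd : d < R / 2 → c' ≤ den) :
    -(yi * R / (2 * c')) ≤ yi * (d - R / 2) / den := by
  rcases le_or_gt (R / 2) d with hc | hc
  · have h1 : 0 ≤ yi * (d - R / 2) / den := div_nonneg (by nlinarith) hden.le
    have h2 : 0 ≤ yi * R / (2 * c') := div_nonneg (by nlinarith) (by linarith)
    linarith
  · have h1 : c' ≤ den := hcd hc
    have s1 : yi * (d - R / 2) / c' ≤ yi * (d - R / 2) / den := by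
      rw [div_le_div_iff₀ hc' hden]
      nlinarith [mul_nonneg (mul_nonneg (by linarith : (0:ℝ) ≤ yi)
        (by linarith : (0:ℝ) ≤ R / 2 - d)) (by linarith : (0:ℝ) ≤ den - c')]
    have s3 : -(yi * R / (2 * c')) ≤ yi * (d - R / 2) / c' := by
      rw [show -(yi * R / (2 * c')) = (-(yi * R / 2)) / c' by ring,
        div_le_div_iff₀ hc' hc']
      nlinarith [mul_nonneg (mul_nonneg hc'.le (by linarith : (0:ℝ) ≤ yi)) hd.le]
    linarith

private lemma aux_term_right (yi d R A δ : ℝ) (hy : 1 ≤ yi) (hδ : 0 < δ) (hδd : δ ≤ d)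
    (hA : 1 ≤ A) (hR : 0 < R) :
    A * (yi * (d - R / 2) / (1 + A * d)) + R / 2 * (yi / d) - yi
      ≤ yi * (R / 2) / (A * δ ^ 2) := by
  have hA0 : 0 < A := lt_of_lt_of_le one_pos hA
  have hd : 0 < d := lt_of_lt_of_le hδ hδd
  have hden : 0 < 1 + A * d := by nlinarith
  have hid : A * (yi * (d - R / 2) / (1 + A * d)) + R / 2 * (yi / d) - yi
      = yi * (R / 2 - d) / (d * (1 + A * d)) := by
    field_simp
    ring
  rw [hid]
  have hdd : 0 < d * (1 + A * d) := by positivity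
  have h1 : yi * (R / 2 - d) / (d * (1 + A * d)) ≤ yi * (R / 2) / (d * (1 + A * d)) := by
    rw [div_le_div_iff₀ hdd hdd]
    nlinarith [mul_nonneg (mul_nonneg (by linarith : (0:ℝ) ≤ yi) hd.le) hdd.le]
  have h2 : yi * (R / 2) / (d * (1 + A * d)) ≤ yi * (R / 2) / (A * δ ^ 2) := by
    rw [div_le_div_iff₀ hdd (by positivity)]
    have hd2 : δ ^ 2 ≤ d ^ 2 := by nlinarith
    have hstep : A * δ ^ 2 ≤ d * (1 + A * d) := by nlinarith
    nlinarith [mul_nonneg (by nlinarith : (0:ℝ) ≤ yi * (R/2)) (sub_nonneg.mpr hstep)]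
  linarith

set_option maxHeartbeats 2000000 in
/-- If the last bin carries a count (`y j ≥ 1` with
`x j - xA = R - Δx_N/2`), all counted centers satisfy `Δx₁/2 ≤ x i - xA ≤ R - Δx_N/2`,
there are two counted bins with distinct centers, `R > Δx_N`, and the asymptotic value
`F_∞ = 1 - (R/(2M)) * ∑ i, y i/(x i - xA)` is strictly negative, then the external
solution of `F a = 0` exists and is acceptable: there is `a > -1/(R - Δx_N/2)` in the
domain of `F` with `F a = 0`. -/
theorem cash_linear_external_solution_right
    (N : ℕ) (x : Fin N → ℝ) (xA R Δx₁ ΔxN : ℝ)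
    (hΔ₁ : 0 < Δx₁) (hΔN : 0 < ΔxN) (hRΔ : ΔxN < R)
    (y : Fin N → ℕ)
    (hpos : ∀ i, 1 ≤ y i → Δx₁ / 2 ≤ x i - xA ∧ x i - xA ≤ R - ΔxN / 2)
    (j : Fin N) (hyj : 1 ≤ y j) (hxj : x j - xA = R - ΔxN / 2)
    (k l : Fin N) (hkl : k ≠ l) (hyk : 1 ≤ y k) (hyl : 1 ≤ y l) (hxkl : x k ≠ x l)
    (g F : ℝ → ℝ)
    (hg : ∀ a, g a = ∑ i, (y i : ℝ) * (x i - xA) / (1 + a * (x i - xA)))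
    (hF : ∀ a, F a = 1 + (R / 2) * (a - (∑ i, (y i : ℝ)) / g a))
    (hFinf : 1 - (R / (2 * ∑ i, (y i : ℝ))) * ∑ i, (y i : ℝ) / (x i - xA) < 0) :
    ∃ a, -1 / (R - ΔxN / 2) < a ∧ (∀ i, 0 < y i → 1 + a * (x i - xA) ≠ 0) ∧
      g a ≠ 0 ∧ F a = 0 := by
  obtain ⟨Q, hQdef⟩ : ∃ Q : ℝ, Q = R - ΔxN / 2 := ⟨_, rfl⟩
  rw [← hQdef] at hxj ⊢
  have hpos : ∀ i, 1 ≤ y i → Δx₁ / 2 ≤ x i - xA ∧ x i - xA ≤ Q := by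
    rw [hQdef]; exact hpos
  have hR : 0 < R := lt_trans hΔN hRΔ
  have hQ : 0 < Q := by rw [hQdef]; linarith
  have hQne : Q ≠ 0 := ne_of_gt hQ
  have hRQ : R / 2 < Q := by rw [hQdef]; linarith
  obtain ⟨M, hM⟩ : ∃ M : ℝ, M = ∑ i, (y i : ℝ) := ⟨_, rfl⟩
  rw [← hM] at hF hFinf
  have hMpos : 0 < M := by
    rw [hM]
    refine Finset.sum_pos' (fun i _ => by positivity) ⟨j, Finset.mem_univ j, ?_⟩
    exact_mod_cast hyj
  -- positivity of counted denominators on (-1/Q, ∞)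
  have hden : ∀ a : ℝ, -1 / Q < a → ∀ i : Fin N, 1 ≤ y i → 0 < 1 + a * (x i - xA) := by
    intro a ha i hi
    obtain ⟨h1, h2⟩ := hpos i hi
    rcases le_or_gt 0 a with h | h
    · nlinarith
    · have haQ : -1 < a * Q := by
        have h' : (-1/Q) * Q < a * Q := mul_lt_mul_of_pos_right ha hQ
        rwa [div_mul_cancel₀ (-1) hQne] at h'
      nlinarith
  obtain ⟨H, hH⟩ : ∃ H : ℝ → ℝ, ∀ a : ℝ,
      H a = ∑ i, (y i : ℝ) * ((x i - xA) - R / 2) / (1 + a * (x i - xA)) :=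
    ⟨_, fun _ => rfl⟩
  -- key algebraic identity
  have key : ∀ a : ℝ, -1 / Q < a →
      g a * (1 + (R / 2) * a) - (R / 2) * M = H a := by
    intro a ha
    rw [hg a, hH a, hM, Finset.sum_mul, Finset.mul_sum, ← Finset.sum_sub_distrib]
    apply Finset.sum_congr rfl
    intro i _
    rcases Nat.eq_zero_or_pos (y i) with h0 | h1
    · simp [h0]
    · have hd := (hden a ha i h1).ne'
      rw [eq_div_iff hd, sub_mul, div_mul_eq_mul_div ((y i : ℝ) * (x i - xA)),
        div_mul_eq_mul_div _ (1 + a * (x i - xA)), mul_div_cancel_right₀ _ hd]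
      ring
  -- positivity of g on the interval
  have hgpos : ∀ a : ℝ, -1 / Q < a → 0 < g a := by
    intro a ha
    rw [hg a]
    refine Finset.sum_pos' (fun i _ => ?_) ⟨j, Finset.mem_univ j, ?_⟩
    · rcases Nat.eq_zero_or_pos (y i) with h0 | h1
      · simp [h0]
      · have hd := hden a ha i h1
        have h1' := (hpos i h1).1
        have hy : (0:ℝ) ≤ (y i : ℝ) := by positivity
        apply div_nonneg _ (le_of_lt hd)
        nlinarith
    · have hdj := hden a ha j hyj
      have h1' := (hpos j hyj).1
      have hy : (1:ℝ) ≤ (y j : ℝ) := by exact_mod_cast hyj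
      apply div_pos _ hdj
      nlinarith
  -- constant c'
  obtain ⟨c', hc'⟩ : ∃ c' : ℝ, c' = (R - ΔxN) / (2 * Q) := ⟨_, rfl⟩
  have hc'pos : 0 < c' := hc' ▸ div_pos (by linarith) (by linarith)
  have hc'eq : (1:ℝ) + (-1/Q) * (R/2) = c' := by
    rw [hc']
    field_simp
    rw [hQdef]; ring
  -- constant ε
  obtain ⟨ε, hε⟩ : ∃ ε : ℝ, ε = min 1 (c' * (R - ΔxN) / (2 * R * M)) := ⟨_, rfl⟩
  have hεpos : 0 < ε := by
    rw [hε]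
    exact lt_min one_pos (div_pos (mul_pos hc'pos (by linarith)) (by nlinarith))
  have hεle1 : ε ≤ 1 := hε ▸ min_le_left _ _
  have hεle : ε * (2 * R * M) ≤ c' * (R - ΔxN) :=
    (le_div_iff₀ (by nlinarith)).mp (hε ▸ min_le_right _ _)
  -- left endpoint a₁
  obtain ⟨a₁, ha₁⟩ : ∃ a₁ : ℝ, a₁ = (ε - 1) / Q := ⟨_, rfl⟩
  have ha₁gt : -1 / Q < a₁ := by
    rw [ha₁, div_lt_div_iff₀ hQ hQ]
    nlinarith
  have ha₁le0 : a₁ ≤ 0 := by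
    rw [ha₁]
    apply div_nonpos_of_nonpos_of_nonneg <;> linarith
  have ha₁Q : 1 + a₁ * Q = ε := by
    rw [ha₁, div_mul_cancel₀ _ hQne]; ring
  -- lower bound each term at a₁
  have hterm_lb : ∀ i : Fin N,
      -((y i : ℝ) * R / (2 * c')) ≤ (y i : ℝ) * ((x i - xA) - R / 2) / (1 + a₁ * (x i - xA)) := by
    intro i
    rcases Nat.eq_zero_or_pos (y i) with h0 | h1
    · simp [h0]
    · obtain ⟨hd1, hd2⟩ := hpos i h1
      have hdpos := hden a₁ ha₁gt i h1
      have hy : (1:ℝ) ≤ (y i : ℝ) := by exact_mod_cast h1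
      have hcd : x i - xA < R / 2 → c' ≤ 1 + a₁ * (x i - xA) := by
        intro hc
        have h2 : a₁ * (R/2) ≤ a₁ * (x i - xA) :=
          mul_le_mul_of_nonpos_left (le_of_lt hc) ha₁le0
        have h3 : (-1/Q) * (R/2) ≤ a₁ * (R/2) :=
          mul_le_mul_of_nonneg_right (le_of_lt ha₁gt) (by linarith)
        linarith [hc'eq]
      exact aux_term_left (y i : ℝ) (x i - xA) R c' (1 + a₁ * (x i - xA)) hy
        (by linarith) hR hc'pos hdpos hcd
  -- H a₁ is positive
  have hHa₁ : 0 < H a₁ := by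
    have hsplit : H a₁ = (∑ i ∈ Finset.univ.erase j,
        (y i : ℝ) * ((x i - xA) - R / 2) / (1 + a₁ * (x i - xA)))
        + (y j : ℝ) * ((x j - xA) - R / 2) / (1 + a₁ * (x j - xA)) := by
      rw [hH a₁]
      exact (Finset.sum_erase_add _ _ (Finset.mem_univ j)).symm
    have hrest : -(M * R / (2 * c')) ≤ ∑ i ∈ Finset.univ.erase j,
        (y i : ℝ) * ((x i - xA) - R / 2) / (1 + a₁ * (x i - xA)) := by
      have hb : ∀ i ∈ Finset.univ.erase j,
          -((y i : ℝ) * R / (2 * c')) ≤ (y i : ℝ) * ((x i - xA) - R / 2) / (1 + a₁ * (x i - xA)) :=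
        fun i _ => hterm_lb i
      have := Finset.sum_le_sum hb
      have hsub : ∑ i ∈ Finset.univ.erase j, ((y i : ℝ) * R / (2 * c'))
          ≤ ∑ i : Fin N, ((y i : ℝ) * R / (2 * c')) := by
        apply Finset.sum_le_sum_of_subset_of_nonneg (Finset.subset_univ _)
        intro i _ _
        have hy0 : (0:ℝ) ≤ (y i : ℝ) := by positivity
        exact div_nonneg (mul_nonneg hy0 hR.le) (by linarith)
      have hsum : ∑ i : Fin N, ((y i : ℝ) * R / (2 * c')) = M * R / (2 * c') := by
        rw [hM, Finset.sum_mul, Finset.sum_div]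
      rw [Finset.sum_neg_distrib] at this
      linarith
    have htj : R * M / c' ≤ (y j : ℝ) * ((x j - xA) - R / 2) / (1 + a₁ * (x j - xA)) := by
      rw [hxj, ha₁Q]
      have hyj' : (1:ℝ) ≤ (y j : ℝ) := by exact_mod_cast hyj
      have h1 : (Q - R / 2) / ε ≤ (y j : ℝ) * (Q - R / 2) / ε := by
        rw [div_le_div_iff₀ hεpos hεpos]
        nlinarith [mul_nonneg (mul_nonneg (by linarith : (0:ℝ) ≤ (y j : ℝ) - 1)
          (by linarith : (0:ℝ) ≤ Q - R / 2)) hεpos.le]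
      have h2 : R * M / c' ≤ (Q - R / 2) / ε := by
        rw [div_le_div_iff₀ hc'pos hεpos]
        have hQR : Q - R / 2 = (R - ΔxN) / 2 := by rw [hQdef]; ring
        rw [hQR]
        nlinarith
      linarith
    have hfin : 0 < R * M / c' - M * R / (2 * c') := by
      have he : R * M / c' - M * R / (2 * c') = R * M / (2 * c') := by ring
      rw [he]
      exact div_pos (by nlinarith) (by linarith)
    linarith [hsplit, hrest, htj]
  -- quantities for the right endpoint
  obtain ⟨T, hT⟩ : ∃ T : ℝ, T = ∑ i, (y i : ℝ) / (x i - xA) := ⟨_, rfl⟩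
  rw [← hT] at hFinf
  obtain ⟨S, hS⟩ : ∃ S : ℝ, S = R / 2 * T - M := ⟨_, rfl⟩
  have hSpos : 0 < S := by
    have h1 : 1 < R / (2 * M) * T := by linarith
    have h2 : M * (R / (2 * M) * T) = R / 2 * T := by field_simp
    nlinarith
  obtain ⟨C, hC⟩ : ∃ C : ℝ, C = M * (R / 2) / ((Δx₁ / 2) ^ 2) := ⟨_, rfl⟩
  have hCpos : 0 < C := by
    rw [hC]
    exact div_pos (by nlinarith) (by positivity)
  obtain ⟨A, hA⟩ : ∃ A : ℝ, A = max 1 (2 * C / S) := ⟨_, rfl⟩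
  have hA1 : 1 ≤ A := hA ▸ le_max_left _ _
  have hApos : 0 < A := lt_of_lt_of_le one_pos hA1
  have hACS : 2 * C / S ≤ A := hA ▸ le_max_right _ _
  have hCA : C / A ≤ S / 2 := by
    rw [div_le_div_iff₀ hApos two_pos]
    have : 2 * C / S * S ≤ A * S := mul_le_mul_of_nonneg_right hACS (le_of_lt hSpos)
    rw [div_mul_cancel₀ _ (ne_of_gt hSpos)] at this
    linarith
  -- H A is negative
  have hHA : H A < 0 := by
    have hgtA : -1 / Q < A := by
      have : -1 / Q < 0 := div_neg_of_neg_of_pos (by norm_num) hQ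
      linarith
    have hcomb : A * H A + S = ∑ i, (A * ((y i : ℝ) * ((x i - xA) - R / 2) / (1 + A * (x i - xA)))
        + R / 2 * ((y i : ℝ) / (x i - xA)) - (y i : ℝ)) := by
      rw [hH A, hS, hT, hM, Finset.mul_sum, Finset.mul_sum,
        Finset.sum_sub_distrib, Finset.sum_add_distrib]
      ring
    have hbound : ∀ i : Fin N,
        A * ((y i : ℝ) * ((x i - xA) - R / 2) / (1 + A * (x i - xA)))
          + R / 2 * ((y i : ℝ) / (x i - xA)) - (y i : ℝ)
          ≤ (y i : ℝ) * (R / 2) / (A * (Δx₁ / 2) ^ 2) := by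
      intro i
      rcases Nat.eq_zero_or_pos (y i) with h0 | h1
      · simp [h0]
      · exact aux_term_right (y i : ℝ) (x i - xA) R A (Δx₁ / 2)
          (by exact_mod_cast h1) (by linarith) (hpos i h1).1 hA1 hR
    have hsum2 : (∑ i, (y i : ℝ) * (R / 2) / (A * (Δx₁ / 2) ^ 2))
        = M * (R / 2) / (A * (Δx₁ / 2) ^ 2) := by
      rw [hM, Finset.sum_mul, Finset.sum_div]
    have hCA' : M * (R / 2) / (A * (Δx₁ / 2) ^ 2) = C / A := by
      rw [hC]
      field_simp
    have hle : A * H A + S ≤ C / A := by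
      rw [hcomb, ← hCA', ← hsum2]
      exact Finset.sum_le_sum (fun i _ => hbound i)
    have hAH : A * H A < 0 := by linarith
    by_contra hcon
    push_neg at hcon
    linarith [mul_nonneg hApos.le hcon]
  -- intermediate value theorem
  have ha₁A : a₁ ≤ A := by linarith
  have hcont : ContinuousOn H (Set.Icc a₁ A) := by
    have hHeq : H = fun a => ∑ i, (y i : ℝ) * ((x i - xA) - R / 2) / (1 + a * (x i - xA)) :=
      funext hH
    rw [hHeq]
    apply continuousOn_finset_sum
    intro i _
    by_cases h0 : y i = 0
    · simp only [h0, Nat.cast_zero, zero_mul, zero_div]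
      exact continuousOn_const
    · apply ContinuousOn.div continuousOn_const
        ((continuous_const.add (continuous_id.mul continuous_const)).continuousOn)
      intro a ha
      exact (hden a (lt_of_lt_of_le ha₁gt ha.1) i (Nat.one_le_iff_ne_zero.mpr h0)).ne'
  obtain ⟨c, hcmem, hc0⟩ := intermediate_value_Icc' ha₁A hcont ⟨hHA.le, hHa₁.le⟩
  have hcQ : -1 / Q < c := lt_of_lt_of_le ha₁gt hcmem.1
  refine ⟨c, hcQ, fun i hi => (hden c hcQ i hi).ne', (hgpos c hcQ).ne', ?_⟩
  have hk := key c hcQ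
  rw [hc0] at hk
  have hgne := (hgpos c hcQ).ne'
  have hFc : F c = (g c * (1 + (R / 2) * c) - (R / 2) * M) / g c := by
    rw [hF c]
    field_simp
    ring
  rw [hFc, hk, zero_div]
end

section
/- Assume there exist at least two indices j ≠ k with y_j ≥ 1, y_k ≥ 1 and x_j ≠ x_k, and that every index i with y_i ≥ 1 satisfies Δx_1/2 ≤ x_i − x_A ≤ R − Δx_N/2. Then there is at most one real number a lying outside the open interval (−2/Δx_1, −1/(R − Δx_N/2)) such that 1 + a·(x_i − x_A) ≠ 0 for all i with y_i > 0, g(a) ≠ 0, and F(a) = 0. In other words, the acceptable maximum-likelihood solution of the linear model, when it exists, is unique. -/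
/-- If there are at least two counted bins with distinct centers and all
counted centers satisfy `Δx₁/2 ≤ x i - xA ≤ R - Δx_N/2`, then there is at most one
acceptable solution of `F a = 0`, i.e. at most one `a` outside the open interval
`(-2/Δx₁, -1/(R - Δx_N/2))`, in the domain of `F`, with `F a = 0`. -/
theorem cash_linear_acceptable_solution_unique
    (N : ℕ) (x : Fin N → ℝ) (xA R Δx₁ ΔxN : ℝ)
    (hΔ₁ : 0 < Δx₁) (hΔN : 0 < ΔxN) (hR : 0 < R)
    (y : Fin N → ℕ)
    (hpos : ∀ i, 1 ≤ y i → Δx₁ / 2 ≤ x i - xA ∧ x i - xA ≤ R - ΔxN / 2)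
    (j k : Fin N) (hjk : j ≠ k) (hyj : 1 ≤ y j) (hyk : 1 ≤ y k) (hxjk : x j ≠ x k)
    (g F : ℝ → ℝ)
    (hg : ∀ a, g a = ∑ i, (y i : ℝ) * (x i - xA) / (1 + a * (x i - xA)))
    (hF : ∀ a, F a = 1 + (R / 2) * (a - (∑ i, (y i : ℝ)) / g a)) :
    ∀ a₁ a₂ : ℝ,
      a₁ ∉ Set.Ioo (-2 / Δx₁) (-1 / (R - ΔxN / 2)) →
      (∀ i, 0 < y i → 1 + a₁ * (x i - xA) ≠ 0) → g a₁ ≠ 0 → F a₁ = 0 →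
      a₂ ∉ Set.Ioo (-2 / Δx₁) (-1 / (R - ΔxN / 2)) →
      (∀ i, 0 < y i → 1 + a₂ * (x i - xA) ≠ 0) → g a₂ ≠ 0 → F a₂ = 0 →
      a₁ = a₂ := by
  intro a₁ a₂ hmem₁ hden₁ hg₁ hF₁ hmem₂ hden₂ hg₂ hF₂
  by_contra hne
  have hW : Δx₁ / 2 ≤ R - ΔxN / 2 := le_trans (hpos j hyj).1 (hpos j hyj).2
  have hWpos : 0 < R - ΔxN / 2 := lt_of_lt_of_le (by linarith) hW
  -- common sign of denominators of counted bins for an acceptable `a`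
  have signlem : ∀ a : ℝ, a ∉ Set.Ioo (-2 / Δx₁) (-1 / (R - ΔxN / 2)) →
      (∀ i, 0 < y i → 1 + a * (x i - xA) ≠ 0) →
      (∀ i, 0 < y i → 1 + a * (x i - xA) < 0) ∨
      (∀ i, 0 < y i → 0 < 1 + a * (x i - xA)) := by
    intro a hmem hden
    simp only [Set.mem_Ioo, not_and, not_lt] at hmem
    rcases le_or_gt a (-2 / Δx₁) with hc | hc
    · left; intro i hyi
      have ht1 := (hpos i hyi).1
      have haD : a * Δx₁ ≤ -2 := (le_div_iff₀ hΔ₁).mp hc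
      have hlt : a < 0 := by nlinarith
      have hkey : a * (x i - xA) ≤ a * (Δx₁ / 2) :=
        mul_le_mul_of_nonpos_left ht1 (le_of_lt hlt)
      have h0 : 1 + a * (x i - xA) ≤ 0 := by nlinarith
      exact lt_of_le_of_ne h0 (hden i hyi)
    · right; intro i hyi
      have hub := hmem hc
      have ht1 := (hpos i hyi).1
      have ht2 := (hpos i hyi).2
      have haW : -1 ≤ a * (R - ΔxN / 2) := by
        have := (div_le_iff₀ hWpos).mp hub
        linarith
      have htpos : 0 < x i - xA := lt_of_lt_of_le (by linarith) ht1
      have h0 : 0 ≤ 1 + a * (x i - xA) := by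
        rcases le_or_gt 0 a with ha | ha
        · nlinarith
        · have hkey : a * (R - ΔxN / 2) ≤ a * (x i - xA) :=
            mul_le_mul_of_nonpos_left ht2 (le_of_lt ha)
          linarith
      exact lt_of_le_of_ne h0 (Ne.symm (hden i hyi))
  have hs₁ := signlem a₁ hmem₁ hden₁
  have hs₂ := signlem a₂ hmem₂ hden₂
  have hP : (∀ i, 0 < y i → 0 < (1 + a₁ * (x i - xA)) * (1 + a₂ * (x i - xA))) ∨
      (∀ i, 0 < y i → (1 + a₁ * (x i - xA)) * (1 + a₂ * (x i - xA)) < 0) := by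
    rcases hs₁ with h1 | h1 <;> rcases hs₂ with h2 | h2
    · exact Or.inl fun i hi => mul_pos_of_neg_of_neg (h1 i hi) (h2 i hi)
    · exact Or.inr fun i hi => mul_neg_of_neg_of_pos (h1 i hi) (h2 i hi)
    · exact Or.inr fun i hi => mul_neg_of_pos_of_neg (h1 i hi) (h2 i hi)
    · exact Or.inl fun i hi => mul_pos (h1 i hi) (h2 i hi)
  -- the score equation in the form K a = 0
  have hK : ∀ a : ℝ, (∀ i, 0 < y i → 1 + a * (x i - xA) ≠ 0) → g a ≠ 0 → F a = 0 →
      ∑ i, (y i : ℝ) * (x i - xA - R / 2) / (1 + a * (x i - xA)) = 0 := by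
    intro a hden hga hFa
    have h0 : 1 + (R / 2) * (a - (∑ i, (y i : ℝ)) / g a) = 0 := (hF a).symm.trans hFa
    have hM : (1 + a * (R / 2)) * g a = (R / 2) * (∑ i, (y i : ℝ)) := by
      field_simp at h0
      linarith
    have hsum : ∑ i, (y i : ℝ) * (x i - xA - R / 2) / (1 + a * (x i - xA)) =
        ∑ i, ((1 + a * (R / 2)) * ((y i : ℝ) * (x i - xA) / (1 + a * (x i - xA)))
          - (R / 2) * (y i : ℝ)) := by
      refine Finset.sum_congr rfl fun i _ => ?_
      by_cases hyi : y i = 0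
      · simp [hyi]
      · have hd := hden i (Nat.pos_of_ne_zero hyi)
        rw [eq_sub_iff_add_eq, mul_div_assoc', div_add' _ _ _ hd, div_eq_div_iff hd hd]
        ring
    rw [hsum, Finset.sum_sub_distrib, ← Finset.mul_sum, ← Finset.mul_sum, ← hg, hM]
    ring
  have hK₁ := hK a₁ hden₁ hg₁ hF₁
  have hK₂ := hK a₂ hden₂ hg₂ hF₂
  -- combine the two score equations
  have hT : (a₂ - a₁) * ∑ i, (y i : ℝ) * (x i - xA - R / 2) ^ 2 /
      ((1 + a₁ * (x i - xA)) * (1 + a₂ * (x i - xA))) = 0 := by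
    have hsum : ∑ i, ((1 + a₁ * (R / 2)) * ((y i : ℝ) * (x i - xA - R / 2) / (1 + a₁ * (x i - xA)))
          - (1 + a₂ * (R / 2)) * ((y i : ℝ) * (x i - xA - R / 2) / (1 + a₂ * (x i - xA)))) =
        ∑ i, (a₂ - a₁) * ((y i : ℝ) * (x i - xA - R / 2) ^ 2 /
          ((1 + a₁ * (x i - xA)) * (1 + a₂ * (x i - xA)))) := by
      refine Finset.sum_congr rfl fun i _ => ?_
      by_cases hyi : y i = 0
      · simp [hyi]
      · have hd₁ := hden₁ i (Nat.pos_of_ne_zero hyi)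
        have hd₂ := hden₂ i (Nat.pos_of_ne_zero hyi)
        rw [mul_div_assoc', mul_div_assoc', mul_div_assoc', div_sub_div _ _ hd₁ hd₂,
          ← mul_div_assoc (a₂ - a₁), div_left_inj' (mul_ne_zero hd₁ hd₂)]
        ring
    rw [Finset.mul_sum, ← hsum, Finset.sum_sub_distrib, ← Finset.mul_sum, ← Finset.mul_sum,
      hK₁, hK₂]
    ring
  have hT0 : ∑ i, (y i : ℝ) * (x i - xA - R / 2) ^ 2 /
      ((1 + a₁ * (x i - xA)) * (1 + a₂ * (x i - xA))) = 0 := by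
    rcases mul_eq_zero.mp hT with h | h
    · exact absurd (sub_eq_zero.mp h).symm hne
    · exact h
  -- a counted bin with center different from R/2
  obtain ⟨i0, hyi0, hti0⟩ : ∃ i0, 0 < y i0 ∧ x i0 - xA - R / 2 ≠ 0 := by
    rcases eq_or_ne (x j - xA - R / 2) 0 with hj0 | hj0
    · refine ⟨k, hyk, fun h => hxjk ?_⟩
      linarith
    · exact ⟨j, hyj, hj0⟩
  have hsq : 0 < (x i0 - xA - R / 2) ^ 2 :=
    lt_of_le_of_ne (sq_nonneg _) (Ne.symm (pow_ne_zero 2 hti0))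
  rcases hP with hP | hP
  · have hpos' : 0 < ∑ i, (y i : ℝ) * (x i - xA - R / 2) ^ 2 /
        ((1 + a₁ * (x i - xA)) * (1 + a₂ * (x i - xA))) := by
      refine Finset.sum_pos' (fun i _ => ?_) ⟨i0, Finset.mem_univ i0, ?_⟩
      · by_cases hyi : y i = 0
        · simp [hyi]
        · exact div_nonneg (mul_nonneg (Nat.cast_nonneg _) (sq_nonneg _))
            (le_of_lt (hP i (Nat.pos_of_ne_zero hyi)))
      · exact div_pos (mul_pos (by exact_mod_cast hyi0) hsq) (hP i0 hyi0)
    exact absurd hT0 (ne_of_gt hpos')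
  · have hneg' : 0 < ∑ i, -((y i : ℝ) * (x i - xA - R / 2) ^ 2 /
        ((1 + a₁ * (x i - xA)) * (1 + a₂ * (x i - xA)))) := by
      refine Finset.sum_pos' (fun i _ => ?_) ⟨i0, Finset.mem_univ i0, ?_⟩
      · by_cases hyi : y i = 0
        · simp [hyi]
        · rw [neg_nonneg]
          exact div_nonpos_of_nonneg_of_nonpos
            (mul_nonneg (Nat.cast_nonneg _) (sq_nonneg _))
            (le_of_lt (hP i (Nat.pos_of_ne_zero hyi)))
      · rw [neg_pos]
        exact div_neg_of_pos_of_neg (mul_pos (by exact_mod_cast hyi0) hsq) (hP i0 hyi0)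
    rw [Finset.sum_neg_distrib, hT0, neg_zero] at hneg'
    exact lt_irrefl 0 hneg'
end

section
/- Let Δx > 0, let N ≥ 2 be an integer, and set R = N·Δx. Then ∫₀¹ df/(Δx/2 + f·(R − Δx)) = (ln(R − Δx/2) − ln(Δx/2))/(R − Δx) = ln(2N − 1)/((N − 1)·Δx), and this quantity is strictly greater than 2/R; equivalently, N·ln(2N − 1) > 2(N − 1). -/
lemma aux_log_gt (t : ℝ) (ht : 1 < t) : 2 - 4 / (t + 1) < Real.log t := by
  set g : ℝ → ℝ := fun x => Real.log x + 4 / (x + 1) with hg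
  have hmono : StrictMonoOn g (Set.Ici (1:ℝ)) := by
    apply strictMonoOn_of_deriv_pos (convex_Ici 1)
    · apply ContinuousOn.add
      · exact Real.continuousOn_log.mono (by intro x hx; simp at hx ⊢; linarith)
      · apply ContinuousOn.div continuousOn_const (by fun_prop)
        intro x hx; simp at hx; intro h; linarith
    · intro x hx
      rw [interior_Ici] at hx
      have hx1 : (1:ℝ) < x := hx
      have hx0 : x ≠ 0 := by linarith
      have hx1' : x + 1 ≠ 0 := by linarith
      have h1 : HasDerivAt g (x⁻¹ + 4 * (-(1 / (x+1)^2))) x := by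
        have hlog := Real.hasDerivAt_log hx0
        have hinv : HasDerivAt (fun y : ℝ => (y+1)⁻¹) (-(1 / (x+1)^2)) x := by
          have := ((hasDerivAt_id x).add_const 1).inv hx1'
          simpa [neg_div, div_eq_mul_inv, Pi.inv_def] using this
        have := hinv.const_mul (4:ℝ)
        have h4 : HasDerivAt (fun y : ℝ => 4 / (y+1)) (4 * (-(1 / (x+1)^2))) x := by
          simpa [div_eq_mul_inv] using this
        exact hlog.add h4
      rw [h1.deriv]
      have key : 4 * x < (x+1)^2 := by nlinarith
      have hxpos : (0:ℝ) < x := by linarith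
      have hsq : (0:ℝ) < (x+1)^2 := by positivity
      rw [show x⁻¹ + 4 * (-(1 / (x+1)^2)) = 1/x - 4/(x+1)^2 by ring]
      rw [sub_pos, div_lt_div_iff₀ hsq hxpos]
      linarith
  have := hmono (Set.self_mem_Ici) (Set.mem_Ici.mpr ht.le) ht
  have hg1 : g 1 = 2 := by simp [hg]; norm_num
  rw [hg1] at this
  have ht1 : t + 1 ≠ 0 := by linarith
  simp only [hg] at this
  linarith

/-- For `Δx > 0`, an integer `N ≥ 2`, and `R = N * Δx`, the expectation
`∫₀¹ df / (Δx/2 + f*(R - Δx))` equals `(ln(R - Δx/2) - ln(Δx/2)) / (R - Δx)`, which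
equals `ln(2N - 1) / ((N - 1) * Δx)` and is strictly greater than `2/R`; equivalently,
`N * ln(2N - 1) > 2 * (N - 1)`. -/
theorem uniform_expectation_reciprocal_distance
    (Δx : ℝ) (hΔ : 0 < Δx) (N : ℕ) (hN : 2 ≤ N) (R : ℝ) (hR : R = N * Δx) :
    (∫ f in (0:ℝ)..1, 1 / (Δx / 2 + f * (R - Δx))) =
      (Real.log (R - Δx / 2) - Real.log (Δx / 2)) / (R - Δx) ∧
    (Real.log (R - Δx / 2) - Real.log (Δx / 2)) / (R - Δx) =
      Real.log (2 * (N : ℝ) - 1) / (((N : ℝ) - 1) * Δx) ∧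
    2 / R < Real.log (2 * (N : ℝ) - 1) / (((N : ℝ) - 1) * Δx) ∧
    2 * ((N : ℝ) - 1) < (N : ℝ) * Real.log (2 * (N : ℝ) - 1) := by
  have hN2 : (2:ℝ) ≤ (N:ℝ) := by exact_mod_cast hN
  have hb : (0:ℝ) < R - Δx := by
    rw [hR]; nlinarith
  have hbne : R - Δx ≠ 0 := ne_of_gt hb
  have ha : (0:ℝ) < Δx / 2 := by linarith
  have hI : (∫ f in (0:ℝ)..1, 1 / (Δx / 2 + f * (R - Δx))) =
      (Real.log (R - Δx / 2) - Real.log (Δx / 2)) / (R - Δx) := by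
    have h1 : ∀ f : ℝ, 1 / (Δx / 2 + f * (R - Δx)) =
        (fun x => 1 / x) ((R - Δx) * f + Δx / 2) := by
      intro f; ring_nf
    simp_rw [h1]
    rw [intervalIntegral.integral_comp_mul_add (fun x => 1/x) hbne (Δx/2)]
    rw [integral_one_div]
    · rw [Real.log_div (by linarith) (by linarith)]
      have : (R - Δx) * 1 + Δx / 2 = R - Δx / 2 := by ring
      rw [this, smul_eq_mul]
      ring
    · intro h
      rcases Set.mem_uIcc.mp h with ⟨h1, h2⟩ | ⟨h1, h2⟩ <;> nlinarith
  refine ⟨hI, ?_, ?_, ?_⟩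
  · have h1 : R - Δx / 2 = (Δx / 2) * (2 * (N:ℝ) - 1) := by rw [hR]; ring
    have h2 : R - Δx = ((N:ℝ) - 1) * Δx := by rw [hR]; ring
    rw [h1, h2, Real.log_mul (ne_of_gt ha) (by nlinarith)]
    ring
  · have hkey : 2 * ((N:ℝ) - 1) < (N:ℝ) * Real.log (2 * (N:ℝ) - 1) := by
      have ht : (1:ℝ) < 2 * (N:ℝ) - 1 := by linarith
      have := aux_log_gt _ ht
      have hne : 2 * (N:ℝ) - 1 + 1 ≠ 0 := by linarith
      have h2 : 2 - 4 / (2 * (N:ℝ) - 1 + 1) = 2 * ((N:ℝ) - 1) / (N:ℝ) := by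
        field_simp; ring
      rw [h2] at this
      rw [div_lt_iff₀ (by linarith : (0:ℝ) < (N:ℝ))] at this
      linarith [this]
    have hRpos : 0 < R := by rw [hR]; positivity
    rw [div_lt_div_iff₀ hRpos (by nlinarith : (0:ℝ) < ((N:ℝ) - 1) * Δx), hR]
    nlinarith [hkey]
  · have ht : (1:ℝ) < 2 * (N:ℝ) - 1 := by linarith
    have := aux_log_gt _ ht
    have h2 : 2 - 4 / (2 * (N:ℝ) - 1 + 1) = 2 * ((N:ℝ) - 1) / (N:ℝ) := by
      field_simp; ring
    rw [h2] at this
    rw [div_lt_iff₀ (by linarith : (0:ℝ) < (N:ℝ))] at this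
    linarith [this]
end

section
/- Assume R > 0 and M = Σ_{i=1}^N y_i ≥ 1. On the domain of pairs (λ, a) with λ > 0 and 1 + a·(x_i − x_A) > 0 for every i with y_i > 0, define C(λ, a) = 2λR·(1 + aR/2) − 2M·ln(λ) − 2·Σ_{i=1}^N y_i·ln(1 + a·(x_i − x_A)). Then ∂C/∂λ(λ, a) = 0 and ∂C/∂a(λ, a) = 0 hold simultaneously if and only if 1 + aR/2 > 0, λ = M/(R·(1 + aR/2)), g(a) ≠ 0, and F(a) = 0. -/
/-- On the domain `λ > 0`, `1 + a*(x i - xA) > 0` for all counted `i`,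
the stationarity conditions `∂C/∂λ = 0` and `∂C/∂a = 0` for the Cash statistic of the
linear model hold simultaneously if and only if `1 + a*R/2 > 0`,
`λ = M/(R*(1 + a*R/2))`, `g(a) ≠ 0` and `F(a) = 0`. -/
theorem cash_linear_stationary_iff
    (N : ℕ) (x : Fin N → ℝ) (xA xB R : ℝ)
    (hx : ∀ i, xA < x i ∧ x i < xB)
    (hR : R = xB - xA) (hRpos : 0 < R)
    (y : Fin N → ℕ) (hM : 1 ≤ ∑ i, y i)
    (C : ℝ → ℝ → ℝ)
    (hC : ∀ l a, C l a = 2 * l * R * (1 + a * R / 2)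
      - 2 * (∑ i, (y i : ℝ)) * Real.log l
      - 2 * ∑ i, (y i : ℝ) * Real.log (1 + a * (x i - xA)))
    (l a : ℝ) (hl : 0 < l) (ha : ∀ i, 0 < y i → 0 < 1 + a * (x i - xA)) :
    (deriv (fun l' => C l' a) l = 0 ∧ deriv (fun a' => C l a') a = 0) ↔
      (0 < 1 + a * R / 2 ∧
       l = (∑ i, (y i : ℝ)) / (R * (1 + a * R / 2)) ∧
       (∑ i, (y i : ℝ) * (x i - xA) / (1 + a * (x i - xA))) ≠ 0 ∧
       1 + (R / 2) * (a - (∑ i, (y i : ℝ)) /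
         (∑ i, (y i : ℝ) * (x i - xA) / (1 + a * (x i - xA)))) = 0) := by
  set M : ℝ := ∑ i, (y i : ℝ) with hMdef
  set G : ℝ := ∑ i, (y i : ℝ) * (x i - xA) / (1 + a * (x i - xA)) with hGdef
  have hMpos : 0 < M := by
    have h1 : (1:ℝ) ≤ M := by rw [hMdef, ← Nat.cast_sum]; exact_mod_cast hM
    linarith
  -- derivative in l
  have hfl : (fun l' => C l' a) = fun l' => 2 * l' * R * (1 + a * R / 2)
      - 2 * M * Real.log l' - 2 * ∑ i, (y i : ℝ) * Real.log (1 + a * (x i - xA)) := by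
    funext l'; rw [hC]
  have hd1 : deriv (fun l' => C l' a) l = 2 * R * (1 + a * R / 2) - 2 * M / l := by
    rw [hfl]
    have h1 : HasDerivAt (fun l' : ℝ => 2 * l' * R * (1 + a * R / 2))
        (2 * R * (1 + a * R / 2)) l := by
      have := (((hasDerivAt_id' (x := l)).const_mul 2).mul_const R).mul_const (1 + a * R / 2)
      simpa using this
    have h2 : HasDerivAt (fun l' : ℝ => 2 * M * Real.log l') (2 * M / l) l := by
      have := (Real.hasDerivAt_log (ne_of_gt hl)).const_mul (2 * M)
      simpa [div_eq_mul_inv] using this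
    have := (h1.sub h2).sub_const (2 * ∑ i, (y i : ℝ) * Real.log (1 + a * (x i - xA)))
    simpa using this.deriv
  -- derivative in a
  have hfa : (fun a' => C l a') = fun a' => 2 * l * R * (1 + a' * R / 2)
      - 2 * M * Real.log l - 2 * ∑ i, (y i : ℝ) * Real.log (1 + a' * (x i - xA)) := by
    funext a'; rw [hC]
  have hd2 : deriv (fun a' => C l a') a = 2 * l * R * (R / 2) - 2 * G := by
    rw [hfa]
    have h1 : HasDerivAt (fun a' : ℝ => 2 * l * R * (1 + a' * R / 2))
        (2 * l * R * (R / 2)) a := by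
      have hlin : HasDerivAt (fun a' : ℝ => 1 + a' * R / 2) (R / 2) a := by
        have := (((hasDerivAt_id' (x := a)).mul_const R).div_const 2).const_add 1
        simpa using this
      simpa using hlin.const_mul (2 * l * R)
    have hsum : HasDerivAt (fun a' : ℝ => ∑ i, (y i : ℝ) * Real.log (1 + a' * (x i - xA)))
        (∑ i, (y i : ℝ) * (x i - xA) / (1 + a * (x i - xA))) a := by
      apply HasDerivAt.fun_sum
      intro i _
      by_cases hy : y i = 0
      · simp only [hy, Nat.cast_zero, zero_mul, zero_div]
        exact hasDerivAt_const a 0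
      · have hpos := ha i (Nat.pos_of_ne_zero hy)
        have hin : HasDerivAt (fun a' : ℝ => 1 + a' * (x i - xA)) (x i - xA) a := by
          have := ((hasDerivAt_id' (x := a)).mul_const (x i - xA)).const_add 1
          simpa using this
        have hlog := hin.log (ne_of_gt hpos)
        have := hlog.const_mul ((y i : ℝ))
        rw [mul_div_assoc]
        exact this
    have := (h1.sub_const (2 * M * Real.log l)).fun_sub (hsum.const_mul 2)
    simpa using this.deriv
  rw [hd1, hd2]
  have hMl : 0 < M / l := div_pos hMpos hl
  constructor
  · rintro ⟨e1, e2⟩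
    have hS : R * (1 + a * R / 2) = M / l := by linear_combination e1 / 2
    have hSpos : 0 < 1 + a * R / 2 := by nlinarith
    have hden : R * (1 + a * R / 2) ≠ 0 := by positivity
    have hlM : l * (R * (1 + a * R / 2)) = M := by
      rw [hS]; field_simp
    have hG : G = l * R * (R / 2) := by linarith
    have hGne : G ≠ 0 := by rw [hG]; positivity
    refine ⟨hSpos, ?_, hGne, ?_⟩
    · rw [eq_div_iff hden]; exact hlM
    · rw [hG, ← hlM]
      field_simp
      ring
  · rintro ⟨hSpos, hlval, hGne, hF⟩
    have hden : R * (1 + a * R / 2) ≠ 0 := by positivity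
    have hlM : l * (R * (1 + a * R / 2)) = M := by
      rw [hlval, div_mul_cancel₀ _ hden]
    constructor
    · have hq : M / l = R * (1 + a * R / 2) := by
        rw [div_eq_iff (ne_of_gt hl)]; linear_combination -hlM
      linear_combination (-2 : ℝ) * hq
    · have hRne : R ≠ 0 := ne_of_gt hRpos
      field_simp at hF
      -- hF should be a polynomial relation
      have : G = l * R * (R / 2) := by
        field_simp
        nlinarith [hF, hlM]
      linarith
end

section
/- Assume R > 0, M = Σ_{i=1}^N y_i ≥ 1, and let the gaps be given by g disjoint subintervals of [x_A, x_B] with total length R_G = Σ_{j=1}^g R_{G,j} < R, mid-points x_{G,j}, S_G = Σ_{j=1}^g R_{G,j}·(x_{G,j} − x_A), and set R_m = (R² − 2S_G)/(R − R_G). On the domain of pairs (λ, a) with λ > 0 and 1 + a·(x_i − x_A) > 0 for every i with y_i > 0, define C(λ, a) = 2λR·(1 + aR/2) − 2λ·Σ_{j=1}^g R_{G,j}·(1 + a·(x_{G,j} − x_A)) − 2M·ln(λ) − 2·Σ_{i=1}^N y_i·ln(1 + a·(x_i − x_A)). Then ∂C/∂λ = 0 and ∂C/∂a = 0 hold simultaneously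 at (λ, a) if and only if R·(1 + aR/2) − (R_G + a·S_G) > 0, λ = M/(R·(1 + aR/2) − (R_G + a·S_G)), g(a) ≠ 0, and 1 + a·R_m/2 − M·R_m/(2·g(a)) = 0. -/
lemma gaps_sq_bound {ι : Type*} [DecidableEq ι] (s : Finset ι) :
    ∀ (R : ℝ) (u v : ι → ℝ), 0 ≤ R →
      (∀ j ∈ s, 0 ≤ u j ∧ u j ≤ v j ∧ v j ≤ R) →
      (∀ j ∈ s, ∀ k ∈ s, j ≠ k → v j ≤ u k ∨ v k ≤ u j) →
      ∑ j ∈ s, (v j ^ 2 - u j ^ 2) ≤ R ^ 2 - (R - ∑ j ∈ s, (v j - u j)) ^ 2 := by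
  induction s using Finset.strongInduction with
  | _ s ih =>
    intro R u v hR hbnd hdisj
    rcases s.eq_empty_or_nonempty with rfl | hne
    · simp
    by_cases hdeg : ∃ j ∈ s, v j ≤ u j
    · obtain ⟨j, hj, hju⟩ := hdeg
      have heq : u j = v j := le_antisymm (hbnd j hj).2.1 hju
      have hsub : s.erase j ⊂ s := Finset.erase_ssubset hj
      have h := ih _ hsub R u v hR
        (fun k hk => hbnd k (Finset.mem_of_mem_erase hk))
        (fun k hk m hm hkm => hdisj k (Finset.mem_of_mem_erase hk) m (Finset.mem_of_mem_erase hm) hkm)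
      rw [← Finset.add_sum_erase s _ hj, ← Finset.add_sum_erase s (fun j => v j - u j) hj]
      simpa [heq] using h
    · push_neg at hdeg
      obtain ⟨j0, hj0, hmax⟩ := s.exists_max_image v hne
      have hkey : ∀ k ∈ s.erase j0, v k ≤ u j0 := by
        intro k hk
        have hks := Finset.mem_of_mem_erase hk
        have hkne := Finset.ne_of_mem_erase hk
        rcases hdisj k hks j0 hj0 hkne with h | h
        · exact h
        · exact absurd (lt_of_lt_of_le (hdeg k hks) (le_trans (hmax k hks) h)) (lt_irrefl _)
      have hu0 : 0 ≤ u j0 := (hbnd j0 hj0).1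
      have hsub : s.erase j0 ⊂ s := Finset.erase_ssubset hj0
      have h := ih _ hsub (u j0) u v hu0
        (fun k hk => ⟨(hbnd k (Finset.mem_of_mem_erase hk)).1,
          (hbnd k (Finset.mem_of_mem_erase hk)).2.1, hkey k hk⟩)
        (fun k hk m hm hkm => hdisj k (Finset.mem_of_mem_erase hk) m (Finset.mem_of_mem_erase hm) hkm)
      rw [← Finset.add_sum_erase s _ hj0, ← Finset.add_sum_erase s (fun j => v j - u j) hj0]
      set T := ∑ k ∈ s.erase j0, (v k - u k) with hT
      have hT0 : 0 ≤ T := Finset.sum_nonneg fun k hk =>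
        sub_nonneg.2 (hbnd k (Finset.mem_of_mem_erase hk)).2.1
      have huv : u j0 ≤ v j0 := (hbnd j0 hj0).2.1
      have hvR : v j0 ≤ R := (hbnd j0 hj0).2.2
      nlinarith [mul_nonneg (sub_nonneg.2 hvR) (by nlinarith : (0:ℝ) ≤ v j0 - u j0 + T)]

/-- For data with gaps (disjoint subintervals of `[xA, xB]` with total
length `R_G < R`, midpoints `x_{G,j}`, `S_G = ∑ R_{G,j}*(x_{G,j} - xA)`, and
`R_m = (R² - 2 S_G)/(R - R_G)`), on the domain `λ > 0`, `1 + a*(x i - xA) > 0`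
for all counted `i`, the stationarity conditions `∂C/∂λ = 0` and `∂C/∂a = 0` for the
gapped Cash statistic hold simultaneously if and only if
`R*(1 + a*R/2) - (R_G + a*S_G) > 0`, `λ = M/(R*(1 + a*R/2) - (R_G + a*S_G))`,
`g(a) ≠ 0` and `1 + a*R_m/2 - M*R_m/(2*g(a)) = 0`. -/
theorem cash_linear_stationary_iff_with_gaps
    (N : ℕ) (x : Fin N → ℝ) (xA xB R : ℝ)
    (hx : ∀ i, xA < x i ∧ x i < xB)
    (hR : R = xB - xA) (hRpos : 0 < R)
    (y : Fin N → ℕ) (hM : 1 ≤ ∑ i, y i)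
    (G : ℕ) (xa xb : Fin G → ℝ)
    (hgap : ∀ j, xA ≤ xa j ∧ xa j ≤ xb j ∧ xb j ≤ xB)
    (hdisj : ∀ j k, j ≠ k → xb j ≤ xa k ∨ xb k ≤ xa j)
    (RG SG Rm : ℝ)
    (hRG : RG = ∑ j, (xb j - xa j)) (hRGlt : RG < R)
    (hSG : SG = ∑ j, (xb j - xa j) * ((xa j + xb j) / 2 - xA))
    (hRm : Rm = (R ^ 2 - 2 * SG) / (R - RG))
    (C : ℝ → ℝ → ℝ)
    (hC : ∀ l a, C l a = 2 * l * R * (1 + a * R / 2)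
      - 2 * l * ∑ j, (xb j - xa j) * (1 + a * ((xa j + xb j) / 2 - xA))
      - 2 * (∑ i, (y i : ℝ)) * Real.log l
      - 2 * ∑ i, (y i : ℝ) * Real.log (1 + a * (x i - xA)))
    (l a : ℝ) (hl : 0 < l) (ha : ∀ i, 0 < y i → 0 < 1 + a * (x i - xA)) :
    (deriv (fun l' => C l' a) l = 0 ∧ deriv (fun a' => C l a') a = 0) ↔
      (0 < R * (1 + a * R / 2) - (RG + a * SG) ∧
       l = (∑ i, (y i : ℝ)) / (R * (1 + a * R / 2) - (RG + a * SG)) ∧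
       (∑ i, (y i : ℝ) * (x i - xA) / (1 + a * (x i - xA))) ≠ 0 ∧
       1 + a * Rm / 2 - (∑ i, (y i : ℝ)) * Rm /
         (2 * ∑ i, (y i : ℝ) * (x i - xA) / (1 + a * (x i - xA))) = 0) := by
  set M : ℝ := ∑ i, (y i : ℝ) with hMdef
  set g : ℝ := ∑ i, (y i : ℝ) * (x i - xA) / (1 + a * (x i - xA)) with hgdef
  have hMpos : (0:ℝ) < M := by
    have : (1:ℝ) ≤ M := by
      rw [hMdef]; push_cast [← Nat.cast_sum]; exact_mod_cast hM
    linarith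
  have hE : 0 < R - RG := sub_pos.2 hRGlt
  -- geometric bound: (R - RG)^2 ≤ R^2 - 2*SG
  have hQpos : 0 < R ^ 2 - 2 * SG := by
    have hb := gaps_sq_bound Finset.univ R (fun j => xa j - xA) (fun j => xb j - xA)
      hRpos.le
      (fun j _ => ⟨sub_nonneg.2 (hgap j).1, sub_le_sub_right (hgap j).2.1 xA,
        by have := (hgap j).2.2; rw [hR]; linarith⟩)
      (fun j _ k _ hjk => by
        rcases hdisj j k hjk with h | h
        · exact Or.inl (by linarith)
        · exact Or.inr (by linarith))
    have h2SG : ∑ j, ((xb j - xA) ^ 2 - (xa j - xA) ^ 2) = 2 * SG := by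
      rw [hSG, Finset.mul_sum]
      exact Finset.sum_congr rfl fun j _ => by ring
    have hRGsum : ∑ j, ((xb j - xA) - (xa j - xA)) = RG := by
      rw [hRG]; exact Finset.sum_congr rfl fun j _ => by ring
    rw [h2SG, hRGsum] at hb
    nlinarith
  have hPgen : ∀ t : ℝ, ∑ j, (xb j - xa j) * (1 + t * ((xa j + xb j) / 2 - xA))
      = RG + t * SG := by
    intro t
    rw [hRG, hSG, Finset.mul_sum, ← Finset.sum_add_distrib]
    exact Finset.sum_congr rfl fun j _ => by ring
  -- derivative in l
  have hd1 : deriv (fun l' => C l' a) l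
      = 2 * (R * (1 + a * R / 2) - (RG + a * SG)) - 2 * M / l := by
    have hfe : (fun l' => C l' a) = fun l' =>
        (2 * R * (1 + a * R / 2) - 2 * (RG + a * SG)) * l'
        - 2 * M * Real.log l'
        - 2 * ∑ i, (y i : ℝ) * Real.log (1 + a * (x i - xA)) := by
      funext l'; rw [hC, hPgen]; ring
    rw [hfe]
    have h1 : HasDerivAt (fun l' : ℝ =>
        (2 * R * (1 + a * R / 2) - 2 * (RG + a * SG)) * l'
        - 2 * M * Real.log l'
        - 2 * ∑ i, (y i : ℝ) * Real.log (1 + a * (x i - xA)))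
        ((2 * R * (1 + a * R / 2) - 2 * (RG + a * SG)) * 1 - 2 * M * l⁻¹) l :=
      (((hasDerivAt_id l).const_mul _).sub
        ((Real.hasDerivAt_log hl.ne').const_mul (2 * M))).sub_const _
    rw [h1.deriv]
    field_simp
  -- derivative in a
  have hds : ∀ i : Fin N, HasDerivAt
      (fun a' => (y i : ℝ) * Real.log (1 + a' * (x i - xA)))
      ((y i : ℝ) * (x i - xA) / (1 + a * (x i - xA))) a := by
    intro i
    rcases Nat.eq_zero_or_pos (y i) with h0 | h0
    · simp only [h0, Nat.cast_zero, zero_mul, zero_div]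
      exact hasDerivAt_const a 0
    · have hne := (ha i h0).ne'
      have hin : HasDerivAt (fun a' => 1 + a' * (x i - xA)) (x i - xA) a := by
        simpa using ((hasDerivAt_id a).mul_const (x i - xA)).const_add 1
      have h2 := (hin.log hne).const_mul (y i : ℝ)
      simpa [mul_div_assoc] using h2
  have hd2 : deriv (fun a' => C l a') a = l * R ^ 2 - 2 * l * SG - 2 * g := by
    have hfe : (fun a' => C l a') = fun a' =>
        (l * R ^ 2 - 2 * l * SG) * a'
        + (2 * l * R - 2 * l * RG - 2 * M * Real.log l)
        - 2 * ∑ i, (y i : ℝ) * Real.log (1 + a' * (x i - xA)) := by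
      funext a'; rw [hC, hPgen]; ring
    rw [hfe]
    have hsum : HasDerivAt
        (fun a' => ∑ i, (y i : ℝ) * Real.log (1 + a' * (x i - xA)))
        (∑ i, (y i : ℝ) * (x i - xA) / (1 + a * (x i - xA))) a :=
      HasDerivAt.fun_sum (fun i _ => hds i)
    have h1 : HasDerivAt (fun a' : ℝ =>
        (l * R ^ 2 - 2 * l * SG) * a'
        + (2 * l * R - 2 * l * RG - 2 * M * Real.log l)
        - 2 * ∑ i, (y i : ℝ) * Real.log (1 + a' * (x i - xA)))
        ((l * R ^ 2 - 2 * l * SG) * 1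
          - 2 * (∑ i, (y i : ℝ) * (x i - xA) / (1 + a * (x i - xA)))) a :=
      (((hasDerivAt_id a).const_mul _).add_const _).sub (hsum.const_mul 2)
    rw [h1.deriv, ← hgdef]
    ring
  rw [hd1, hd2]
  have hDdef : R * (1 + a * R / 2) - (RG + a * SG)
      = (R - RG) + a * (R ^ 2 - 2 * SG) / 2 := by ring
  constructor
  · rintro ⟨h1, h2⟩
    have hD : R * (1 + a * R / 2) - (RG + a * SG) = M / l := by
      field_simp at h1 ⊢
      linarith
    have hDpos : 0 < R * (1 + a * R / 2) - (RG + a * SG) := by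
      rw [hD]; exact div_pos hMpos hl
    have hg : g = l * (R ^ 2 - 2 * SG) / 2 := by linarith
    have hgpos : 0 < g := by
      rw [hg]; positivity
    refine ⟨hDpos, ?_, hgpos.ne', ?_⟩
    · rw [hD]
      field_simp
    · have hMl : M = l * (R * (1 + a * R / 2) - (RG + a * SG)) := by
        field_simp at hD; linarith
      rw [hRm, hg]
      rw [hDdef] at hMl
      have hEne : (R - RG) ≠ 0 := hE.ne'
      have hQne : (R ^ 2 - 2 * SG) ≠ 0 := hQpos.ne'
      have hlne : l ≠ 0 := hl.ne'
      rw [hMl]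
      field_simp
      ring
  · rintro ⟨hDpos, hleq, hgne, heq⟩
    have hMl : M = l * (R * (1 + a * R / 2) - (RG + a * SG)) := by
      have hDne : R * (1 + a * R / 2) - (RG + a * SG) ≠ 0 := hDpos.ne'
      rw [hleq]; exact (div_mul_cancel₀ M hDne).symm
    constructor
    · have h : 2 * M / l = 2 * (R * (1 + a * R / 2) - (RG + a * SG)) := by
        rw [hMl]; field_simp
      linarith
    · -- from heq derive 2*g*D = M*(R^2-2SG)
      rw [hRm] at heq
      have hEne : (R - RG) ≠ 0 := hE.ne'
      field_simp [hgne] at heq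
      have h3 : 2 * g * ((R - RG) + a * (R ^ 2 - 2 * SG) / 2)
          = M * (R ^ 2 - 2 * SG) := by
        have h0 : (R - RG) * (2 * g * ((R - RG) + a * (R ^ 2 - 2 * SG) / 2)
            - M * (R ^ 2 - 2 * SG)) = 0 := by linear_combination (R - RG) * heq
        rcases mul_eq_zero.1 h0 with h | h
        · exact absurd h hEne
        · linarith
      rw [hDdef] at hMl
      have hD2 : (0:ℝ) < (R - RG) + a * (R ^ 2 - 2 * SG) / 2 := by
        rw [← hDdef]; exact hDpos
      have h4 : (2 * g - l * (R ^ 2 - 2 * SG))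
          * ((R - RG) + a * (R ^ 2 - 2 * SG) / 2) = 0 := by
        linear_combination h3 + (R ^ 2 - 2 * SG) * hMl
      rcases mul_eq_zero.1 h4 with h5 | h5
      · linarith
      · exact absurd h5 hD2.ne'
end
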